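/- arXiv:2011.03126 — 5 statements merged into one kernel-verified Lean document; each statement's English description precedes it below -/
import Mathlib

section
/- Fix k ∈ ℕ and functions f, g : ℝ → ℂ. For all distinct real numbers λ_1, …, λ_{k+1}: (fg)^{[k]}(λ_1,…,λ_{k+1}) = Σ_{j=0}^k f^{[j]}(λ_1,…,λ_{j+1}) · g^{[k−j]}(λ_{j+1},…,λ_{k+1}). If in addition f, g ∈ C^k(ℝ), then this formula holds for all (λ_1,…,λ_{k+1}) ∈ ℝ^{k+1} (with the divided differences interpreted via their continuous extensions). -/
open MeasureTheory Filter
open scoped ENNReal NNReal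

/-- Recursive divided difference `f^{[k]}`. -/
noncomputable def divDiff (f : ℝ → ℂ) : (k : ℕ) → (Fin (k + 1) → ℝ) → ℂ
  | 0, lam => f (lam 0)
  | k + 1, lam =>
      (divDiff f k (fun i => lam i.castSucc) -
          divDiff f k
            (Fin.snoc (fun i : Fin k => lam i.castSucc.castSucc) (lam (Fin.last (k + 1))))) /
        (((lam ((Fin.last k).castSucc) : ℝ) : ℂ) - ((lam (Fin.last (k + 1)) : ℝ) : ℂ))

lemma divDiff_congr (g : ℝ → ℂ) {m n : ℕ} (h : m = n) (μ : Fin (m+1) → ℝ) (ν : Fin (n+1) → ℝ)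
    (hμν : ∀ i : ℕ, (hi : i < n+1) → μ ⟨i, by omega⟩ = ν ⟨i, hi⟩) :
    divDiff g m μ = divDiff g n ν := by
  subst h
  congr 1
  funext i
  exact hμν i.val i.isLt

lemma divDiff_succ (g : ℝ → ℂ) (n : ℕ) (μ : Fin (n+2) → ℝ) :
    divDiff g (n+1) μ =
      (divDiff g n (fun i : Fin (n+1) => μ ⟨i.val, by have := i.isLt; omega⟩) -
        divDiff g n (fun i : Fin (n+1) =>
          μ ⟨if i.val < n then i.val else n+1, by have := i.isLt; split <;> omega⟩)) /
      (((μ ⟨n, by omega⟩ : ℝ) : ℂ) - ((μ ⟨n+1, by omega⟩ : ℝ) : ℂ)) := by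
  have h1 : (fun i : Fin (n+1) => μ i.castSucc) =
      fun i : Fin (n+1) => μ ⟨i.val, by have := i.isLt; omega⟩ := by
    funext i; congr 1
  have h2 : (Fin.snoc (fun i : Fin n => μ i.castSucc.castSucc) (μ (Fin.last (n+1))) :
      Fin (n+1) → ℝ) = fun i : Fin (n+1) =>
        μ ⟨if i.val < n then i.val else n+1, by have := i.isLt; split <;> omega⟩ := by
    funext i
    induction i using Fin.lastCases with
    | last => rw [Fin.snoc_last]; congr 1; exact Fin.ext (by simp)
    | cast i =>
      simp only [Fin.snoc_castSucc]
      congr 1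
      exact Fin.ext (by simp [i.isLt])
  rw [divDiff, h1, h2]
  rfl

lemma divDiff_succ' (g : ℝ → ℂ) {m n : ℕ} (h : m = n + 1) (μ : Fin (m+1) → ℝ) :
    divDiff g m μ =
      (divDiff g n (fun i : Fin (n+1) => μ ⟨i.val, by have := i.isLt; omega⟩) -
        divDiff g n (fun i : Fin (n+1) =>
          μ ⟨if i.val < n then i.val else n+1, by have := i.isLt; split <;> omega⟩)) /
      (((μ ⟨n, by omega⟩ : ℝ) : ℂ) - ((μ ⟨n+1, by omega⟩ : ℝ) : ℂ)) := by
  subst h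
  exact divDiff_succ g n μ

lemma alg {k : ℕ} (a w vA vB : Fin (k+1) → ℂ) (d c : ℂ) (hd : d ≠ 0)
    (hw : ∀ j : Fin (k+1), j.val < k → w j = a j) (hc : vB (Fin.last k) = c) :
    (∑ j, a j * vA j) - (∑ j, w j * vB j) =
      (∑ j, a j * ((vA j - vB j)/d) + ((a (Fin.last k) - w (Fin.last k))/d) * c) * d := by
  rw [add_mul, Finset.sum_mul, div_mul_eq_mul_div, div_mul_cancel₀ _ hd]
  have h1 : ∀ j : Fin (k+1), a j * ((vA j - vB j)/d) * d = a j * vA j - a j * vB j := by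
    intro j; field_simp
  rw [Finset.sum_congr rfl (fun j _ => h1 j), Finset.sum_sub_distrib, ← hc]
  rw [Fin.sum_univ_castSucc (f := fun j => a j * vB j),
    Fin.sum_univ_castSucc (f := fun j => w j * vB j)]
  have h2 : ∀ j : Fin k, w j.castSucc = a j.castSucc := fun j => hw _ (by simp)
  simp only [fun j => h2 j]
  ring

theorem divDiff_mul (f g : ℝ → ℂ) (k : ℕ) :
    ∀ (lam : Fin (k + 1) → ℝ), Function.Injective lam →
      divDiff (fun x => f x * g x) k lam =
        ∑ j : Fin (k + 1),
          divDiff f j.val (fun i : Fin (j.val + 1) =>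
            lam ⟨i.val, by have := j.isLt; have := i.isLt; omega⟩) *
          divDiff g (k - j.val) (fun i : Fin (k - j.val + 1) =>
            lam ⟨j.val + i.val, by have := j.isLt; have := i.isLt; omega⟩) := by
  induction k with
  | zero =>
    intro lam _
    simp [divDiff]
  | succ k ih =>
    intro lam hlam
    have hd : (((lam ⟨k, by omega⟩ : ℝ) : ℂ) - ((lam ⟨k+1, by omega⟩ : ℝ) : ℂ)) ≠ 0 := by
      rw [sub_ne_zero]
      intro h
      have h' : lam ⟨k, by omega⟩ = lam ⟨k+1, by omega⟩ := by exact_mod_cast h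
      have := hlam h'
      simp [Fin.ext_iff] at this
    have hA' : Function.Injective (fun i : Fin (k+1) => lam ⟨i.val, by have := i.isLt; omega⟩) := by
      intro x y h
      have := hlam h
      simpa [Fin.ext_iff] using this
    have hB' : Function.Injective (fun i : Fin (k+1) =>
        lam ⟨if i.val < k then i.val else k+1, by have := i.isLt; split <;> omega⟩) := by
      intro x y h
      have := hlam h
      simp only [Fin.mk.injEq] at this
      have hx := x.isLt; have hy := y.isLt
      apply Fin.ext
      split_ifs at this <;> omega
    rw [divDiff_succ, ih _ hA', ih _ hB', div_eq_iff hd]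
    refine Eq.trans (alg
      (fun j : Fin (k+1) => divDiff f j.val (fun i : Fin (j.val + 1) =>
        lam ⟨i.val, by have := i.isLt; have := j.isLt; omega⟩))
      (fun j : Fin (k+1) => divDiff f j.val (fun i : Fin (j.val + 1) =>
        lam ⟨if i.val < k then i.val else k+1, by have := i.isLt; split <;> omega⟩))
      (fun j : Fin (k+1) => divDiff g (k - j.val) (fun i : Fin (k - j.val + 1) =>
        lam ⟨j.val + i.val, by have := i.isLt; have := j.isLt; omega⟩))
      (fun j : Fin (k+1) => divDiff g (k - j.val) (fun i : Fin (k - j.val + 1) =>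
        lam ⟨if j.val + i.val < k then j.val + i.val else k+1,
          by have := i.isLt; have := j.isLt; split <;> omega⟩))
      _ (g (lam ⟨k+1, by omega⟩)) hd ?_ ?_) ?_
    · -- hw
      intro j hj
      beta_reduce
      congr 1
      funext i
      congr 1
      apply Fin.ext
      show (if (i : ℕ) < k then (i : ℕ) else k+1) = (i : ℕ)
      have := i.isLt
      split <;> omega
    · -- hc
      beta_reduce
      rw [divDiff_congr g (show k - (Fin.last k).val = 0 by simp)
        _ (fun i : Fin 1 => lam ⟨k+1, by omega⟩) ?_]
      · rfl
      · intro i hi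
        congr 1
        apply Fin.ext
        show (if (Fin.last k : ℕ) + i < k then (Fin.last k : ℕ) + i else k + 1) = k + 1
        simp
    · -- rest
      congr 1
      conv_rhs => rw [Fin.sum_univ_castSucc]
      congr 1
      · apply Finset.sum_congr rfl
        intro j _
        beta_reduce
        congr 1
        symm
        rw [divDiff_succ' g (show k + 1 - (j.castSucc : ℕ) = (k - (j : ℕ)) + 1 by
          have := j.isLt; simp; omega)]
        congr 1
        · congr 1
          · refine congrArg _ (funext fun i => ?_)
            congr 1
            apply Fin.ext
            show ((j : ℕ) + if (i : ℕ) < k - (j : ℕ) then (i : ℕ) else k - (j : ℕ) + 1)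
              = (if (j : ℕ) + (i : ℕ) < k then (j : ℕ) + (i : ℕ) else k + 1)
            have := i.isLt; have := j.isLt
            split_ifs <;> omega
        · congr 2
          · congr 1
            apply Fin.ext
            show (j : ℕ) + (k - (j : ℕ)) = k
            have := j.isLt; omega
          · congr 1
            apply Fin.ext
            show (j : ℕ) + (k - (j : ℕ) + 1) = k + 1
            have := j.isLt; omega
      · beta_reduce
        congr 1
        · symm
          rw [divDiff_succ' f (show ((Fin.last (k+1) : ℕ)) = k + 1 by simp)]
          exact rfl
        · symm
          rw [divDiff_congr g (show k + 1 - (Fin.last (k+1) : ℕ) = 0 by simp)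
            _ (fun i : Fin 1 => lam ⟨k+1, by omega⟩) ?_]
          · rfl
          · intro i hi
            congr 1
            apply Fin.ext
            show (Fin.last (k+1) : ℕ) + i = k + 1
            simp
            omega

theorem part2 (k : ℕ) (f g : ℝ → ℂ)
    (F G : (j : ℕ) → (Fin (j + 1) → ℝ) → ℂ) (H : (Fin (k + 1) → ℝ) → ℂ)
    (hF : ∀ j, j ≤ k → Continuous (F j) ∧
      ∀ mu : Fin (j + 1) → ℝ, Function.Injective mu → F j mu = divDiff f j mu)
    (hG : ∀ j, j ≤ k → Continuous (G j) ∧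
      ∀ mu : Fin (j + 1) → ℝ, Function.Injective mu → G j mu = divDiff g j mu)
    (hH : Continuous H ∧ ∀ mu : Fin (k + 1) → ℝ, Function.Injective mu →
      H mu = divDiff (fun x => f x * g x) k mu) :
    ∀ lam : Fin (k + 1) → ℝ,
      H lam =
        ∑ j : Fin (k + 1),
          F j.val (fun i : Fin (j.val + 1) =>
            lam ⟨i.val, by have := j.isLt; have := i.isLt; omega⟩) *
          G (k - j.val) (fun i : Fin (k - j.val + 1) =>
            lam ⟨j.val + i.val, by have := j.isLt; have := i.isLt; omega⟩) := by
  intro lam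
  classical
  set S : Set ℝ := {ε | ∃ p : Fin (k+1) × Fin (k+1),
    p.1 ≠ p.2 ∧ lam p.1 + (p.1 : ℕ) * ε = lam p.2 + (p.2 : ℕ) * ε} with hS
  have hSfin : S.Finite := by
    have hsub : S ⊆ ⋃ p : Fin (k+1) × Fin (k+1),
        {ε | p.1 ≠ p.2 ∧ lam p.1 + (p.1 : ℕ) * ε = lam p.2 + (p.2 : ℕ) * ε} := by
      rintro ε ⟨p, hp⟩
      exact Set.mem_iUnion.2 ⟨p, hp⟩
    refine Set.Finite.subset (Set.finite_iUnion fun p => ?_) hsub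
    by_cases hp : p.1 = p.2
    · convert Set.finite_empty
      ext ε
      simp [hp]
    · apply Set.Subsingleton.finite
      rintro x ⟨-, hx⟩ y ⟨-, hy⟩
      have hc : ((p.1 : ℕ) : ℝ) ≠ ((p.2 : ℕ) : ℝ) := by
        intro h
        exact hp (Fin.ext (by exact_mod_cast h))
      have h1 : (((p.1 : ℕ) : ℝ) - ((p.2 : ℕ) : ℝ)) * x =
          (((p.1 : ℕ) : ℝ) - ((p.2 : ℕ) : ℝ)) * y := by linarith
      exact mul_left_cancel₀ (sub_ne_zero.2 hc) h1
  set φ : ℝ → (Fin (k+1) → ℝ) := fun ε i => lam i + (i : ℕ) * ε with hφ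
  have hφc : Continuous φ := by
    apply continuous_pi
    intro i
    fun_prop
  have hφ0 : φ 0 = lam := by funext i; simp [hφ]
  have hL : Filter.NeBot (nhdsWithin (0:ℝ) Sᶜ) := by
    rw [← mem_closure_iff_nhdsWithin_neBot]
    exact (hSfin.countable.dense_compl ℝ).closure_eq ▸ Set.mem_univ _
  have htend : Filter.Tendsto φ (nhdsWithin (0:ℝ) Sᶜ) (nhds lam) := by
    have := hφc.tendsto 0
    rw [hφ0] at this
    exact this.mono_left nhdsWithin_le_nhds
  have hinj : ∀ ε ∈ Sᶜ, Function.Injective (φ ε) := by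
    intro ε hε x y h
    by_contra hxy
    exact hε ⟨(x, y), hxy, h⟩
  set RHS : (Fin (k + 1) → ℝ) → ℂ := fun μ =>
    ∑ j : Fin (k + 1),
      F j.val (fun i : Fin (j.val + 1) =>
        μ ⟨i.val, by have := i.isLt; have := j.isLt; omega⟩) *
      G (k - j.val) (fun i : Fin (k - j.val + 1) =>
        μ ⟨j.val + i.val, by have := i.isLt; have := j.isLt; omega⟩) with hRHS
  have hRHSc : Continuous RHS := by
    apply continuous_finset_sum
    intro j _
    apply Continuous.mul
    · exact (hF j.val (by have := j.isLt; omega)).1.comp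
        (continuous_pi fun i => continuous_apply _)
    · exact (hG (k - j.val) (by omega)).1.comp
        (continuous_pi fun i => continuous_apply _)
  have hev : ∀ᶠ ε in nhdsWithin (0:ℝ) Sᶜ, H (φ ε) = RHS (φ ε) := by
    filter_upwards [self_mem_nhdsWithin] with ε hε
    have hinjε := hinj ε hε
    rw [hH.2 _ hinjε, divDiff_mul f g k _ hinjε, hRHS]
    apply Finset.sum_congr rfl
    intro j _
    have hj1 : Function.Injective (fun i : Fin (j.val + 1) =>
        φ ε ⟨i.val, by have := i.isLt; have := j.isLt; omega⟩) := by
      intro a b h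
      have := hinjε h
      simpa [Fin.ext_iff] using this
    have hj2 : Function.Injective (fun i : Fin (k - j.val + 1) =>
        φ ε ⟨j.val + i.val, by have := i.isLt; have := j.isLt; omega⟩) := by
      intro a b h
      have := hinjε h
      simp [Fin.ext_iff] at this
      exact Fin.ext this
    rw [(hF j.val (by have := j.isLt; omega)).2 _ hj1,
      (hG (k - j.val) (by omega)).2 _ hj2]
  have h1 : Filter.Tendsto (fun ε => H (φ ε)) (nhdsWithin (0:ℝ) Sᶜ) (nhds (H lam)) :=
    (hH.1.tendsto lam).comp htend
  have h2 : Filter.Tendsto (fun ε => RHS (φ ε)) (nhdsWithin (0:ℝ) Sᶜ) (nhds (RHS lam)) :=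
    (hRHSc.tendsto lam).comp htend
  exact tendsto_nhds_unique (h1.congr' hev) h2

/-- Proposition 2.3(iii), the product rule for divided differences:
for distinct `λ_1, …, λ_{k+1}`,
`(fg)^{[k]}(λ_1,…,λ_{k+1}) = ∑_{j=0}^k f^{[j]}(λ_1,…,λ_{j+1}) g^{[k-j]}(λ_{j+1},…,λ_{k+1})`;
and if `f, g ∈ C^k(ℝ)`, the same formula holds for all `λ ∈ ℝ^{k+1}` for the (unique)
continuous extensions of the divided differences. -/
theorem stmt_7 (k : ℕ) (hk : 1 ≤ k) (f g : ℝ → ℂ) :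
    (∀ lam : Fin (k + 1) → ℝ, Function.Injective lam →
        divDiff (fun x => f x * g x) k lam =
          ∑ j : Fin (k + 1),
            divDiff f j.val
                (fun i : Fin (j.val + 1) =>
                  lam ⟨i.val, by have := i.isLt; have := j.isLt; omega⟩) *
              divDiff g (k - j.val)
                (fun i : Fin (k - j.val + 1) =>
                  lam ⟨j.val + i.val, by have := i.isLt; have := j.isLt; omega⟩)) ∧
      (ContDiff ℝ (k : ℕ∞) f → ContDiff ℝ (k : ℕ∞) g →
        ∀ (F G : (j : ℕ) → (Fin (j + 1) → ℝ) → ℂ) (H : (Fin (k + 1) → ℝ) → ℂ),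
          (∀ j, j ≤ k → Continuous (F j) ∧
            ∀ mu : Fin (j + 1) → ℝ, Function.Injective mu → F j mu = divDiff f j mu) →
          (∀ j, j ≤ k → Continuous (G j) ∧
            ∀ mu : Fin (j + 1) → ℝ, Function.Injective mu → G j mu = divDiff g j mu) →
          (Continuous H ∧ ∀ mu : Fin (k + 1) → ℝ, Function.Injective mu →
            H mu = divDiff (fun x => f x * g x) k mu) →
          ∀ lam : Fin (k + 1) → ℝ,
            H lam =
              ∑ j : Fin (k + 1),
                F j.val
                    (fun i : Fin (j.val + 1) =>
                      lam ⟨i.val, by have := i.isLt; have := j.isLt; omega⟩) *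
                  G (k - j.val)
                    (fun i : Fin (k - j.val + 1) =>
                      lam ⟨j.val + i.val, by have := i.isLt; have := j.isLt; omega⟩)) := by
  constructor
  · exact divDiff_mul f g k
  · intro _ _ F G H hF hG hH
    exact part2 k f g F G H hF hG hH
end

section
/- Let Ξ be a Polish space and (Σ, 𝓗, ρ) a σ-finite measure space. If φ : Ξ × Σ → ℂ is measurable with respect to the product σ-algebra 𝓑_Ξ ⊗ 𝓗 (𝓑_Ξ the Borel σ-algebra of Ξ), then the function Σ ∋ σ ↦ sup_{ξ ∈ Ξ} |φ(ξ,σ)| ∈ [0,∞] is measurable with respect to the ρ-completion of 𝓗 (and the Borel σ-algebra of [0,∞]). -/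
open MeasureTheory Filter
open scoped ENNReal NNReal
open Set Topology



lemma analyticSet_nullMeasurableSet {Z : Type*} [TopologicalSpace Z] [PolishSpace Z]
    [MeasurableSpace Z] [BorelSpace Z] {A : Set Z} (hA : MeasureTheory.AnalyticSet A)
    (μ : Measure Z) [IsFiniteMeasure μ] : NullMeasurableSet A μ := by
  rw [AnalyticSet] at hA
  rcases hA with rfl | ⟨f, fcont, rfl⟩
  · exact MeasurableSet.empty.nullMeasurableSet
  -- main claim: inner regularity by compacts
  have key : ∀ ε : ℝ≥0∞, ε ≠ 0 → ε ≠ ∞ →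
      ∃ K, K ⊆ range f ∧ IsCompact K ∧ μ (range f) ≤ μ K + ε := by
    intro ε hε0 hεtop
    -- step: enlarge one coordinate bound
    have step : ∀ (k : ℕ) (s : Set (ℕ → ℕ)) (c : ℝ≥0∞), c ≠ 0 →
        ∃ m : ℕ, μ (f '' s) ≤ μ (f '' (s ∩ {x | x k ≤ m})) + c := by
      intro k s c hc
      have h1 : (⋃ m : ℕ, f '' (s ∩ {x | x k ≤ m})) = f '' s := by
        rw [← image_iUnion, ← inter_iUnion]
        have : s ∩ (⋃ m : ℕ, {x : ℕ → ℕ | x k ≤ m}) = s := by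
          apply inter_eq_self_of_subset_left
          intro x _
          exact mem_iUnion.2 ⟨x k, le_refl (x k)⟩
        rw [this]
      have hmono : Monotone fun m : ℕ => f '' (s ∩ {x | x k ≤ m}) := fun a b hab =>
        image_mono (inter_subset_inter_right _ fun x hx => le_trans hx hab)
      have h2 : μ (f '' s) = ⨆ m, μ (f '' (s ∩ {x | x k ≤ m})) := by
        rw [← h1]; exact hmono.measure_iUnion
      by_cases hμ : μ (f '' s) = 0
      · exact ⟨0, by simp [hμ]⟩
      have hfin : μ (f '' s) ≠ ∞ := measure_ne_top μ _
      have hlt : μ (f '' s) - c < ⨆ m, μ (f '' (s ∩ {x | x k ≤ m})) := by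
        rw [← h2]; exact ENNReal.sub_lt_self hfin hμ hc
      obtain ⟨m, hm⟩ := lt_iSup_iff.mp hlt
      exact ⟨m, tsub_le_iff_right.mp hm.le⟩
    -- geometric weights
    set εs : ℕ → ℝ≥0∞ := fun k => ε / 2 ^ (k + 1) with hεsdef
    have h2top : ∀ j : ℕ, ((2 : ℝ≥0∞) ^ j) ≠ ∞ := fun j => ENNReal.pow_ne_top (by norm_num)
    have hεs0 : ∀ k, εs k ≠ 0 := by
      intro k
      simp only [hεsdef, ne_eq, ENNReal.div_eq_zero_iff, not_or]
      exact ⟨hε0, h2top (k+1)⟩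
    have hsum : ∀ k, (∑ i ∈ Finset.range k, εs i) + ε / 2 ^ k = ε := by
      intro k
      induction k with
      | zero => simp
      | succ k ih =>
        have hd : ε / 2 ^ (k + 1) = ε / 2 ^ k / 2 := by
          rw [pow_succ, div_eq_mul_inv, div_eq_mul_inv, div_eq_mul_inv,
            ENNReal.mul_inv (Or.inl (pow_ne_zero k (by norm_num))) (Or.inl (h2top k)), mul_assoc]
        have hhalf : ε / 2 ^ (k + 1) + ε / 2 ^ (k + 1) = ε / 2 ^ k := by
          rw [hd]; exact ENNReal.add_halves _
        rw [Finset.sum_range_succ, hεsdef]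
        rw [add_assoc, hhalf]
        exact ih
    have sumle : ∀ k, (∑ i ∈ Finset.range k, εs i) ≤ ε := fun k => (hsum k) ▸ le_self_add
    -- invariant
    set P : ℕ → (ℕ → ℕ) → Prop :=
      fun k n => μ (range f) ≤ μ (f '' {x | ∀ i < k, x i ≤ n i}) + ∑ i ∈ Finset.range k, εs i
      with hPdef
    have base : P 0 (fun _ => 0) := by
      have : {x : ℕ → ℕ | ∀ i < 0, x i ≤ 0} = univ := by
        ext x; simp
      simp [hPdef, this]
    have ind : ∀ (k : ℕ) (n : ℕ → ℕ), P k n → ∃ m, P (k + 1) (Function.update n k m) := by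
      intro k n hP
      obtain ⟨m, hm⟩ := step k {x | ∀ i < k, x i ≤ n i} (εs k) (hεs0 k)
      refine ⟨m, ?_⟩
      have hset : {x : ℕ → ℕ | ∀ i < k + 1, x i ≤ Function.update n k m i}
          = {x | ∀ i < k, x i ≤ n i} ∩ {x | x k ≤ m} := by
        ext x
        simp only [mem_setOf_eq, mem_inter_iff]
        constructor
        · intro h
          refine ⟨fun i hi => ?_, ?_⟩
          · have := h i (hi.trans (Nat.lt_succ_self k))
            rwa [Function.update_of_ne hi.ne] at this
          · have := h k (Nat.lt_succ_self k)
            rwa [Function.update_self] at this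
        · rintro ⟨h1, h2⟩ i hi
          rcases Nat.lt_succ_iff_lt_or_eq.mp hi with hik | rfl
          · rw [Function.update_of_ne hik.ne]; exact h1 i hik
          · rwa [Function.update_self]
      simp only [hPdef] at hP ⊢
      rw [hset, Finset.sum_range_succ]
      calc μ (range f) ≤ μ (f '' {x | ∀ i < k, x i ≤ n i}) + ∑ i ∈ Finset.range k, εs i := hP
        _ ≤ (μ (f '' ({x | ∀ i < k, x i ≤ n i} ∩ {x | x k ≤ m})) + εs k)
            + ∑ i ∈ Finset.range k, εs i := add_le_add_left hm _
        _ = μ (f '' ({x | ∀ i < k, x i ≤ n i} ∩ {x | x k ≤ m}))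
            + (∑ i ∈ Finset.range k, εs i + εs k) := by ring
    -- build the sequence by recursion with choice
    let G : ∀ k : ℕ, {n : ℕ → ℕ // P k n} := fun k =>
      Nat.rec ⟨fun _ => 0, base⟩
        (fun k ih => ⟨Function.update ih.1 k (Classical.choose (ind k ih.1 ih.2)),
          Classical.choose_spec (ind k ih.1 ih.2)⟩) k
    set n : ℕ → ℕ := fun k => (G (k + 1)).1 k with hndef
    have agree : ∀ j k, k < j → (G j).1 k = n k := by
      intro j
      induction j with
      | zero => intro k hk; omega
      | succ j ih =>
        intro k hk
        rcases Nat.lt_succ_iff_lt_or_eq.mp hk with h | rfl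
        · have : (G (j + 1)).1 k = (G j).1 k := Function.update_of_ne h.ne _ _
          rw [this, ih k h]
        · rfl
    have hPn : ∀ k, P k n := by
      intro k
      have hseteq : {x : ℕ → ℕ | ∀ i < k, x i ≤ n i} = {x | ∀ i < k, x i ≤ (G k).1 i} := by
        ext x
        refine forall₂_congr fun i hi => ?_
        rw [agree k i hi]
      simp only [hPdef, hseteq]
      exact (G k).2
    -- the compact set
    set C : ℕ → Set Z := fun k => closure (f '' {x | ∀ i < k, x i ≤ n i}) with hCdef
    have hCanti : Antitone C := by
      intro k l hkl
      exact closure_mono (image_mono fun x hx i hi => hx i (hi.trans_le hkl))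
    set K : Set Z := f '' {x | ∀ i, x i ≤ n i} with hKdef
    have hsetpi : {x : ℕ → ℕ | ∀ i, x i ≤ n i} = univ.pi fun i => Iic (n i) := by
      ext x; simp [Set.mem_pi, Pi.le_def]
    have hKc : IsCompact K := by
      rw [hKdef, hsetpi]
      exact (isCompact_univ_pi fun i => (finite_Iic (n i)).isCompact).image fcont
    have hKsub : K ⊆ range f := image_subset_range _ _
    letI := TopologicalSpace.upgradeIsCompletelyMetrizable Z
    have hInt : (⋂ k, C k) ⊆ K := by
      intro z hz
      rw [mem_iInter] at hz
      have hpick : ∀ k : ℕ, ∃ x : ℕ → ℕ, (∀ i < k, x i ≤ n i) ∧ dist z (f x) < 1 / (k + 1) := by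
        intro k
        obtain ⟨y, hy, hdy⟩ := Metric.mem_closure_iff.mp (hz k) (1 / (k + 1)) (by positivity)
        obtain ⟨x, hx, rfl⟩ := hy
        exact ⟨x, hx, hdy⟩
      choose x hx hdist using hpick
      set m : ℕ → ℕ := fun i => max (n i) (Finset.sup (Finset.range (i + 1)) fun k => x k i)
        with hmdef
      have hxm : ∀ k, x k ∈ univ.pi fun i => Iic (m i) := by
        intro k
        rw [Set.mem_univ_pi]
        intro i
        simp only [mem_Iic, hmdef]
        rcases lt_or_ge i k with h | h
        · exact le_max_of_le_left (hx k i h)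
        · exact le_max_of_le_right (Finset.le_sup (f := fun k => x k i) (Finset.mem_range.2 (Nat.lt_succ_of_le h)))
      obtain ⟨a, -, ψ, hψ, hta⟩ :=
        (isCompact_univ_pi fun i => (finite_Iic (m i)).isCompact).tendsto_subseq hxm
      have ha : ∀ i, a i ≤ n i := by
        intro i
        have h1 : Tendsto (fun k => x (ψ k) i) atTop (𝓝 (a i)) := by
          exact (tendsto_pi_nhds.mp hta) i
        have hev : ∀ᶠ k in atTop, x (ψ k) i ∈ Iic (n i) := by
          filter_upwards [eventually_ge_atTop (i + 1)] with k hk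
          exact hx (ψ k) i (lt_of_lt_of_le (Nat.lt_of_succ_le hk) (hψ.le_apply))
        have := (isClosed_discrete (Iic (n i))).mem_of_tendsto h1 hev
        exact this
      have h3 : Tendsto (fun k => f (x k)) atTop (𝓝 z) := by
        rw [tendsto_iff_dist_tendsto_zero]
        apply squeeze_zero (fun k => dist_nonneg) (fun k => (dist_comm (f (x k)) z ▸ (hdist k).le))
        exact tendsto_one_div_add_atTop_nhds_zero_nat
      have h4 : Tendsto (fun k => f (x (ψ k))) atTop (𝓝 z) := h3.comp hψ.tendsto_atTop
      have h5 : Tendsto (fun k => f (x (ψ k))) atTop (𝓝 (f a)) := (fcont.tendsto a).comp hta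
      exact ⟨a, ha, tendsto_nhds_unique h5 h4⟩
    have hμK : μ (range f) ≤ μ K + ε := by
      have h1 : ∀ k, μ (range f) ≤ μ (C k) + ε := fun k =>
        (hPn k).trans (add_le_add (measure_mono subset_closure) (sumle k))
      have h2 : μ (⋂ k, C k) = ⨅ k, μ (C k) :=
        Directed.measure_iInter (fun k => isClosed_closure.measurableSet.nullMeasurableSet)
          (hCanti.directed_ge) ⟨0, measure_ne_top μ _⟩
      calc μ (range f) ≤ ⨅ k, (μ (C k) + ε) := le_iInf h1
        _ = (⨅ k, μ (C k)) + ε := ENNReal.iInf_add.symm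
        _ = μ (⋂ k, C k) + ε := by rw [h2]
        _ ≤ μ K + ε := add_le_add_left (measure_mono hInt) _
    exact ⟨K, hKsub, hKc, hμK⟩
  -- wrap up: build a measurable subset of full outer measure
  have hK : ∀ j : ℕ, ∃ K, K ⊆ range f ∧ IsCompact K ∧
      μ (range f) ≤ μ K + ((j : ℝ≥0∞) + 1)⁻¹ := by
    intro j
    exact key _ (by simp) (by simp [ENNReal.inv_ne_top])
  choose K hKsub hKc hKle using hK
  set t' : Set Z := ⋃ j, K j with ht'def
  have ht'meas : MeasurableSet t' := MeasurableSet.iUnion fun j => (hKc j).isClosed.measurableSet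
  have ht'sub : t' ⊆ range f := iUnion_subset hKsub
  set D : Set Z := toMeasurable μ (range f) \ t' with hDdef
  have hD0 : μ D = 0 := by
    have hbound : ∀ j : ℕ, μ D ≤ ((j : ℝ≥0∞) + 1)⁻¹ := by
      intro j
      have hsub2 : D ⊆ toMeasurable μ (range f) \ K j :=
        diff_subset_diff_right (subset_iUnion K j)
      have hKj : K j ⊆ toMeasurable μ (range f) := (hKsub j).trans (subset_toMeasurable μ _)
      have : μ (toMeasurable μ (range f) \ K j)
          = μ (toMeasurable μ (range f)) - μ (K j) :=
        measure_diff hKj ((hKc j).isClosed.measurableSet.nullMeasurableSet) (measure_ne_top μ _)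
      calc μ D ≤ μ (toMeasurable μ (range f) \ K j) := measure_mono hsub2
        _ = μ (toMeasurable μ (range f)) - μ (K j) := this
        _ ≤ ((j : ℝ≥0∞) + 1)⁻¹ := by
          rw [measure_toMeasurable]
          rw [tsub_le_iff_right, add_comm]
          exact hKle j
    refine le_antisymm ?_ zero_le
    refine ENNReal.le_of_forall_pos_le_add fun δ hδ _ => ?_
    obtain ⟨j, hj⟩ := ENNReal.exists_inv_nat_lt (ne_of_gt (ENNReal.coe_pos.2 hδ))
    calc μ D ≤ ((j : ℝ≥0∞) + 1)⁻¹ := hbound j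
      _ ≤ ((j : ℝ≥0∞))⁻¹ := ENNReal.inv_le_inv.2 le_self_add
      _ ≤ (δ : ℝ≥0∞) := hj.le
      _ = 0 + δ := (zero_add _).symm
  have hsplit : range f = t' ∪ (range f \ t') := by
    rw [union_diff_self, union_eq_self_of_subset_left ht'sub]
  rw [hsplit]
  refine (ht'meas.nullMeasurableSet).union (NullMeasurableSet.of_null ?_)
  exact measure_mono_null (diff_subset_diff_left (subset_toMeasurable μ _)) hD0

lemma prod_mono_right {Ξ S : Type*} (mΞ : MeasurableSpace Ξ) {m₁ m₂ : MeasurableSpace S}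
    (h : m₁ ≤ m₂) : @Prod.instMeasurableSpace Ξ S mΞ m₁ ≤ @Prod.instMeasurableSpace Ξ S mΞ m₂ :=
  sup_le_sup le_rfl (MeasurableSpace.comap_mono h)

lemma exists_countablyGenerated_prod {Ξ S : Type*} [mΞ : MeasurableSpace Ξ]
    [m : MeasurableSpace S] {M : Set (Ξ × S)} (hM : MeasurableSet M) :
    ∃ m₀ : MeasurableSpace S, m₀ ≤ m ∧ @MeasurableSpace.CountablyGenerated S m₀ ∧
      MeasurableSet[@Prod.instMeasurableSpace Ξ S mΞ m₀] M := by
  let Q : Set (Ξ × S) → Prop := fun M => ∃ m₀ : MeasurableSpace S, m₀ ≤ m ∧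
      @MeasurableSpace.CountablyGenerated S m₀ ∧
      MeasurableSet[@Prod.instMeasurableSpace Ξ S mΞ m₀] M
  have hbot : ∀ t : Set S, MeasurableSet[m] t →
      ∃ m₀ : MeasurableSpace S, m₀ ≤ m ∧ @MeasurableSpace.CountablyGenerated S m₀ ∧
        MeasurableSet[m₀] t := by
    intro t ht
    refine ⟨MeasurableSpace.generateFrom {t}, ?_,
      @MeasurableSpace.CountablyGenerated.mk S (.generateFrom {t})
        ⟨{t}, countable_singleton t, rfl⟩, ?_⟩
    · exact MeasurableSpace.generateFrom_le (by rintro s rfl; exact ht)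
    · exact MeasurableSpace.measurableSet_generateFrom rfl
  let m' : MeasurableSpace (Ξ × S) :=
    { MeasurableSet' := Q
      measurableSet_empty := by
        obtain ⟨m₀, h1, h2, h3⟩ := hbot ∅ MeasurableSet.empty
        exact ⟨m₀, h1, h2, @MeasurableSet.empty _ (@Prod.instMeasurableSpace Ξ S mΞ m₀)⟩
      measurableSet_compl := by
        rintro M ⟨m₀, h1, h2, h3⟩
        exact ⟨m₀, h1, h2, h3.compl⟩
      measurableSet_iUnion := by
        intro g hg
        choose m₀ hle hcg hmeas using hg
        refine ⟨⨆ i, m₀ i, iSup_le hle, ?_, ?_⟩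
        · choose b hb hgen using fun i => (hcg i).isCountablyGenerated
          refine @MeasurableSpace.CountablyGenerated.mk S (⨆ i, m₀ i) ⟨⋃ i, b i, countable_iUnion hb, ?_⟩
          refine le_antisymm (iSup_le fun i => ?_) (MeasurableSpace.generateFrom_le ?_)
          · rw [hgen i]
            exact MeasurableSpace.generateFrom_mono (subset_iUnion b i)
          · intro s hs
            obtain ⟨i, hi⟩ := mem_iUnion.mp hs
            exact le_iSup m₀ i _ ((hgen i) ▸ MeasurableSpace.measurableSet_generateFrom hi)
        · exact MeasurableSet.iUnion fun i =>
            prod_mono_right mΞ (le_iSup m₀ i) _ (hmeas i) }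
  have hle : (Prod.instMeasurableSpace : MeasurableSpace (Ξ × S)) ≤ m' := by
    rw [← generateFrom_prod]
    refine MeasurableSpace.generateFrom_le ?_
    rintro _ ⟨s, hs, t, ht, rfl⟩
    obtain ⟨m₀, h1, h2, h3⟩ := hbot t ht
    exact ⟨m₀, h1, h2, @MeasurableSet.prod _ _ mΞ m₀ _ _ hs h3⟩
  exact hle _ hM

lemma exists_map_cantor {S : Type*} (m₀ : MeasurableSpace S)
    [h : @MeasurableSpace.CountablyGenerated S m₀] :
    ∃ g : S → (ℕ → Bool), @Measurable S (ℕ → Bool) m₀ _ g ∧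
      m₀ ≤ MeasurableSpace.comap g MeasurableSpace.pi := by
  refine ⟨@MeasurableSpace.mapNatBool S m₀ h, @MeasurableSpace.measurable_mapNatBool S m₀ h, ?_⟩
  conv_lhs => rw [← @MeasurableSpace.generateFrom_natGeneratingSequence S m₀ h]
  refine MeasurableSpace.generateFrom_le ?_
  rintro s ⟨n, rfl⟩
  refine ⟨(fun y : ℕ → Bool => y n) ⁻¹' {true}, (measurable_pi_apply n) (measurableSet_singleton true), ?_⟩
  ext x
  simp [MeasurableSpace.mapNatBool]

lemma nullMeasurable_proj_finite {Ξ : Type*} [TopologicalSpace Ξ] [PolishSpace Ξ]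
    [MeasurableSpace Ξ] [BorelSpace Ξ] {S : Type*} [m : MeasurableSpace S] (ρ : Measure S)
    [IsFiniteMeasure ρ] {M : Set (Ξ × S)} (hM : MeasurableSet M) :
    NullMeasurableSet (Prod.snd '' M) ρ := by
  obtain ⟨m₀, hle, hcg, hM₀⟩ := exists_countablyGenerated_prod hM
  obtain ⟨g, hgm₀, hcomap⟩ := @exists_map_cantor S m₀ hcg
  have hg : @Measurable S (ℕ → Bool) m MeasurableSpace.pi g :=
    Measurable.mono (ma := m₀) (ma' := m) hgm₀ hle le_rfl
  have hprodle : @Prod.instMeasurableSpace Ξ S _ m₀ ≤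
      MeasurableSpace.comap (Prod.map id g) Prod.instMeasurableSpace := by
    rw [← @generateFrom_prod Ξ S _ m₀]
    refine MeasurableSpace.generateFrom_le ?_
    rintro _ ⟨s, hs, t, ht, rfl⟩
    obtain ⟨B, hB, hBt⟩ := hcomap _ ht
    refine MeasurableSpace.measurableSet_comap.mpr ⟨s ×ˢ B, hs.prod hB, ?_⟩
    rw [← hBt]
    ext ⟨ξ, σ⟩
    simp [Prod.map]
  obtain ⟨N, hN, hNM⟩ := MeasurableSpace.measurableSet_comap.mp (hprodle _ hM₀)
  clear hprodle hM₀ hcomap hgm₀ hcg hle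
  clear m₀
  have hA : AnalyticSet (Prod.snd '' N) := hN.analyticSet_image measurable_snd
  haveI : IsFiniteMeasure (ρ.map g) := Measure.isFiniteMeasure_map ρ g
  haveI : PolishSpace (ℕ → Bool) := {}
  have h1 : NullMeasurableSet (Prod.snd '' N) (ρ.map g) := analyticSet_nullMeasurableSet hA _
  have him : Prod.snd '' M = g ⁻¹' (Prod.snd '' N) := by
    ext σ
    constructor
    · rintro ⟨⟨ξ, σ'⟩, hp, rfl⟩
      rw [← hNM] at hp
      exact ⟨(ξ, g σ'), hp, rfl⟩
    · rintro ⟨⟨ξ, y⟩, hp, hy⟩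
      refine ⟨(ξ, σ), ?_, rfl⟩
      rw [← hNM]
      have : (Prod.map id g) (ξ, σ) = (ξ, y) := by
        simp only [Prod.map, id]
        exact Prod.ext rfl hy.symm
      simpa [mem_preimage, this] using hp
  rw [him]
  exact h1.preimage (hg.quasiMeasurePreserving ρ)

lemma nullMeasurable_proj {Ξ : Type*} [TopologicalSpace Ξ] [PolishSpace Ξ]
    [MeasurableSpace Ξ] [BorelSpace Ξ] {S : Type*} [m : MeasurableSpace S] (ρ : Measure S)
    [SigmaFinite ρ] {M : Set (Ξ × S)} (hM : MeasurableSet M) :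
    NullMeasurableSet (Prod.snd '' M) ρ := by
  have hcov : Prod.snd '' M = ⋃ n, (Prod.snd '' M) ∩ spanningSets ρ n := by
    rw [← inter_iUnion, iUnion_spanningSets, inter_univ]
  rw [hcov]
  refine NullMeasurableSet.iUnion fun n => ?_
  haveI : IsFiniteMeasure (ρ.restrict (spanningSets ρ n)) :=
    ⟨by rw [Measure.restrict_apply_univ]; exact measure_spanningSets_lt_top ρ n⟩
  obtain ⟨t, htm, hts⟩ := nullMeasurable_proj_finite (ρ.restrict (spanningSets ρ n)) hM
  refine ⟨t ∩ spanningSets ρ n, htm.inter (measurableSet_spanningSets ρ n), ?_⟩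
  have h2 := (ae_restrict_iff' (measurableSet_spanningSets ρ n)).mp
    (Filter.eventuallyEq_set.mp hts)
  refine Filter.eventuallyEq_set.mpr ?_
  filter_upwards [h2] with x hx
  simp only [mem_inter_iff]
  constructor
  · rintro ⟨h3, h4⟩; exact ⟨(hx h4).mp h3, h4⟩
  · rintro ⟨h3, h4⟩; exact ⟨(hx h4).mpr h3, h4⟩

/-- Lemma 2.5, Measurability: if `Ξ` is Polish, `(Σ, 𝓗, ρ)` is a σ-finite
measure space, and `φ : Ξ × Σ → ℂ` is product measurable, then
`σ ↦ sup_{ξ ∈ Ξ} |φ(ξ,σ)| ∈ [0,∞]` is measurable with respect to the `ρ`-completion of `𝓗`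
(i.e. it is null-measurable with respect to `ρ`). -/
theorem stmt_9 (Ξ : Type) [TopologicalSpace Ξ] [PolishSpace Ξ] [MeasurableSpace Ξ]
    [BorelSpace Ξ] (S : Type) [MeasurableSpace S] (ρ : Measure S) [SigmaFinite ρ]
    (φ : Ξ × S → ℂ) (hφ : Measurable φ) :
    NullMeasurable (fun σ : S => ⨆ ξ : Ξ, (‖φ (ξ, σ)‖₊ : ℝ≥0∞)) ρ := by
  have key : ∀ a : ℝ≥0∞,
      NullMeasurableSet ((fun σ : S => ⨆ ξ : Ξ, (‖φ (ξ, σ)‖₊ : ℝ≥0∞)) ⁻¹' Ioi a) ρ := by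
    intro a
    have hMeq : (fun σ : S => ⨆ ξ : Ξ, (‖φ (ξ, σ)‖₊ : ℝ≥0∞)) ⁻¹' Ioi a
        = Prod.snd '' {p : Ξ × S | a < (‖φ p‖₊ : ℝ≥0∞)} := by
      ext σ
      simp only [mem_preimage, mem_Ioi, lt_iSup_iff, mem_image]
      constructor
      · rintro ⟨ξ, hξ⟩; exact ⟨(ξ, σ), hξ, rfl⟩
      · rintro ⟨⟨ξ, σ'⟩, hp, rfl⟩; exact ⟨ξ, hp⟩
    rw [hMeq]
    exact nullMeasurable_proj ρ (hφ.nnnorm.coe_nnreal_ennreal measurableSet_Ioi)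
  have h := @measurable_of_Ioi ℝ≥0∞ (NullMeasurableSpace S ρ) _ _ _ _ _ _ _
    (fun σ : S => ⨆ ξ : Ξ, (‖φ (ξ, σ)‖₊ : ℝ≥0∞)) key
  exact h
end

section
/- Fix k ∈ ℕ. Then C^{k+1}(ℝ) ⊆ W_k(ℝ)_loc: for every f ∈ C^{k+1}(ℝ) and every r > 0 there exists a Borel complex measure μ on ℝ with ∫_ℝ |ξ|^k |μ|(dξ) < ∞ such that f(λ) = ∫_ℝ e^{iλξ} μ(dξ) for all λ ∈ [-r,r]. -/
open MeasureTheory Filter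
open scoped ENNReal NNReal

private lemma aux_parseval (T a : ℝ) (hT0 : 0 < T) (G : ℝ → ℂ) (hGc : Continuous G)
    (hGa : G a = 0) (hGb : G (a + T) = 0) :
    Summable (fun n : ℤ => ‖fourierCoeffOn (lt_add_of_pos_right a hT0) G n‖ ^ 2) := by
  haveI : Fact (0 < T) := ⟨hT0⟩
  have hcont : Continuous (AddCircle.liftIco T a G) :=
    AddCircle.liftIco_continuous (by rw [hGa, hGb]) hGc.continuousOn
  set Gc : C(AddCircle T, ℂ) := ⟨AddCircle.liftIco T a G, hcont⟩ with hGcdef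
  have hsum := (lp.memℓp (fourierBasis.repr (ContinuousMap.toLp 2 AddCircle.haarAddCircle ℂ Gc))).summable
    (by norm_num : (0:ℝ) < (2 : ℝ≥0∞).toReal)
  have heq : ∀ n : ℤ, fourierBasis.repr (ContinuousMap.toLp 2 AddCircle.haarAddCircle ℂ Gc) n
      = fourierCoeffOn (lt_add_of_pos_right a hT0) G n := by
    intro n
    rw [fourierBasis_repr, fourierCoeff_toLp]
    exact fourierCoeff_liftIco_eq (T := T) G n
  refine hsum.congr fun n => ?_
  rw [heq n, show ((2:ℝ≥0∞).toReal) = (2:ℝ) by norm_num, Real.rpow_two]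

private lemma aux_summable (k : ℕ) (hk : 1 ≤ k) (c A : ℤ → ℂ) (K : ℝ) (hK : 0 ≤ K)
    (hA2 : Summable fun n => ‖A n‖ ^ 2)
    (hb : ∀ n : ℤ, n ≠ 0 → ‖c n‖ * |(n : ℝ)| ^ (k + 1) ≤ K * ‖A n‖) :
    Summable (fun n : ℤ => (1 + |(n : ℝ)| ^ k) * ‖c n‖) := by
  have hsum2 : Summable (fun n : ℤ => (1 / (n : ℝ)) ^ 2) := by
    refine (Real.summable_one_div_int_pow.2 one_lt_two).congr fun n => ?_
    rw [div_pow, one_pow]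
  have hind : Summable (fun n : ℤ => if n = 0 then ‖c 0‖ else 0) := by
    apply summable_of_ne_finset_zero (s := {0})
    intro b hb'
    simp only [Finset.mem_singleton] at hb'
    simp [hb']
  refine Summable.of_nonneg_of_le (fun n => by positivity) (fun n => ?_)
    (((hA2.mul_left K).add (hsum2.mul_left K)).add hind)
  by_cases hn : n = 0
  · subst hn
    simp only [Int.cast_zero, abs_zero, zero_pow (by omega : k ≠ 0), add_zero, one_mul,
      div_zero, if_pos rfl, if_true, zero_pow, mul_zero]
    have h1 : (0:ℝ) ≤ K * ‖A 0‖ ^ 2 := by positivity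
    nlinarith [norm_nonneg (c 0)]
  · set N := |(n : ℝ)| with hNdef
    have hN0 : (0:ℝ) < N := by
      simp only [hNdef, abs_pos]
      exact_mod_cast hn
    have hN1 : (1:ℝ) ≤ N := by
      have := Int.one_le_abs (by exact_mod_cast hn : n ≠ 0)
      calc (1:ℝ) = ((1:ℤ):ℝ) := by norm_num
        _ ≤ ((|n|:ℤ):ℝ) := by exact_mod_cast this
        _ = N := by push_cast; rfl
    set u : ℝ := 1 / N with hu
    have hu0 : 0 < u := by positivity
    have huN : N * u = 1 := by
      rw [hu]; field_simp
    have hc : ‖c n‖ * (N ^ k * N) ≤ K * ‖A n‖ := by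
      have := hb n hn
      rwa [pow_succ] at this
    have h1 : ‖c n‖ * N ^ k ≤ K * ‖A n‖ * u := by
      rw [hu, mul_one_div, le_div_iff₀ hN0]
      calc ‖c n‖ * N ^ k * N = ‖c n‖ * (N ^ k * N) := by ring
        _ ≤ K * ‖A n‖ := hc
    have h2 : 2 * (K * ‖A n‖ * u) ≤ K * ‖A n‖ ^ 2 + K * u ^ 2 := by
      nlinarith [two_mul_le_add_sq ‖A n‖ u, hK]
    have hNk : (1:ℝ) ≤ N ^ k := one_le_pow₀ hN1
    have hueq : (1 / (n : ℝ)) ^ 2 = u ^ 2 := by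
      rw [hu, div_pow, div_pow, one_pow, sq_abs]
    rw [if_neg hn, add_zero, hueq]
    nlinarith [h1, h2, mul_nonneg (sub_nonneg.2 hNk) (norm_nonneg (c n)), norm_nonneg (c n)]

private lemma aux_measure (k : ℕ) (T : ℝ) (hT0 : 0 < T) (c : ℤ → ℂ)
    (hS : Summable (fun n : ℤ => (1 + |(n : ℝ)| ^ k) * ‖c n‖)) :
    ∃ (ν : Measure ℝ) (h : ℝ → ℂ),
      IsFiniteMeasure ν ∧ Measurable h ∧ (∀ ξ, ‖h ξ‖ = 1) ∧
      (∫⁻ ξ, (‖ξ‖₊ : ℝ≥0∞) ^ k ∂ν) ≠ ∞ ∧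
      ∀ lam : ℝ, ∫ ξ, Complex.exp (Complex.I * lam * ξ) * h ξ ∂ν
        = ∑' n : ℤ, c n * Complex.exp (Complex.I * lam * ((2 * Real.pi * n / T : ℝ) : ℂ)) := by
  set π := Real.pi
  have hπ : 0 < π := Real.pi_pos
  set ξ : ℤ → ℝ := fun n => 2 * π * n / T with hξdef
  have hc1 : Summable (fun n : ℤ => ‖c n‖) := by
    refine hS.of_nonneg_of_le (fun n => norm_nonneg _) (fun n => ?_)
    have h1 : (1:ℝ) ≤ 1 + |(n:ℝ)| ^ k := le_add_of_nonneg_right (by positivity)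
    nlinarith [norm_nonneg (c n)]
  have hc2 : Summable (fun n : ℤ => ‖c n‖ * |ξ n| ^ k) := by
    refine (hS.mul_left ((2 * π / T) ^ k)).of_nonneg_of_le (fun n => by positivity) (fun n => ?_)
    have hξn : |ξ n| ^ k = (2 * π / T) ^ k * |(n:ℝ)| ^ k := by
      rw [← mul_pow]
      congr 1
      rw [hξdef]
      rw [abs_div, abs_mul, abs_mul, abs_of_pos hπ, abs_of_pos hT0]
      simp [abs_of_nonneg]
      ring
    rw [hξn]
    have hcn := norm_nonneg (c n)
    have : (0:ℝ) ≤ (2 * π / T) ^ k := by positivity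
    nlinarith [abs_nonneg ((n:ℝ)), pow_nonneg (abs_nonneg ((n:ℝ))) k]
  set ν : Measure ℝ := Measure.sum (fun n : ℤ => (‖c n‖₊ : ℝ≥0∞) • Measure.dirac (ξ n)) with hνdef
  have hcNN : Summable (fun n : ℤ => ‖c n‖₊) := by
    rw [← NNReal.summable_coe]
    simpa [coe_nnnorm] using hc1
  have hfin : IsFiniteMeasure ν := by
    constructor
    rw [hνdef, Measure.sum_apply _ MeasurableSet.univ]
    simp only [Measure.smul_apply, measure_univ, smul_eq_mul, mul_one]
    exact lt_top_iff_ne_top.2 (ENNReal.tsum_coe_ne_top_iff_summable.2 hcNN)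
  set q : ℤ → ℂ := fun m => if c m = 0 then 1 else c m / (‖c m‖ : ℂ) with hqdef
  set h : ℝ → ℂ := fun x => q (round (x * T / (2 * π))) with hhdef
  have hqnorm : ∀ m, ‖q m‖ = 1 := by
    intro m
    rw [hqdef]
    by_cases hm : c m = 0
    · simp [hm]
    · simp only [if_neg hm]
      rw [norm_div, Complex.norm_real, Real.norm_eq_abs, abs_of_nonneg (norm_nonneg _),
        div_self (norm_ne_zero_iff.2 hm)]
  have hmeas : Measurable h := by
    have h1 : Measurable (fun x : ℝ => round (x * T / (2 * π))) := by
      have : (fun x : ℝ => round (x * T / (2 * π))) = fun x : ℝ => ⌊x * T / (2 * π) + 1/2⌋ := by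
        funext x; rw [round_eq]
      rw [this]
      exact Int.measurable_floor.comp (((measurable_id.mul_const T).div_const _).add_const _)
    exact (measurable_from_top (f := q)).comp h1
  have hround : ∀ n : ℤ, round (ξ n * T / (2 * π)) = n := by
    intro n
    have : ξ n * T / (2 * π) = (n : ℝ) := by
      rw [hξdef]
      field_simp
    rw [this, round_intCast]
  have hhξ : ∀ n : ℤ, (‖c n‖ : ℂ) * h (ξ n) = c n := by
    intro n
    rw [hhdef]
    simp only [hround n]
    rw [hqdef]
    by_cases hm : c n = 0
    · simp [hm]
    · simp only [if_neg hm]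
      rw [mul_div_assoc']
      rw [mul_comm, mul_div_assoc, div_self (by exact_mod_cast norm_ne_zero_iff.2 hm), mul_one]
  refine ⟨ν, h, hfin, hmeas, fun x => hqnorm _, ?_, ?_⟩
  · rw [hνdef, lintegral_sum_measure]
    have : ∀ n : ℤ, ∫⁻ x, (‖x‖₊ : ℝ≥0∞) ^ k ∂((‖c n‖₊ : ℝ≥0∞) • Measure.dirac (ξ n))
        = ((‖c n‖₊ * ‖ξ n‖₊ ^ k : ℝ≥0) : ℝ≥0∞) := by
      intro n
      rw [lintegral_smul_measure, lintegral_dirac]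
      push_cast
      ring
    rw [tsum_congr this]
    apply ENNReal.tsum_coe_ne_top_iff_summable.2
    rw [← NNReal.summable_coe]
    simpa [coe_nnnorm, Real.norm_eq_abs] using hc2
  · intro lam
    have hnorm1 : ∀ x : ℝ, ‖Complex.exp (Complex.I * lam * x) * h x‖ = 1 := by
      intro x
      rw [norm_mul, hhdef, hqnorm, mul_one, Complex.norm_exp]
      simp
    have hintmeas : Measurable (fun x : ℝ => Complex.exp (Complex.I * lam * x) * h x) :=
      (Complex.measurable_exp.comp (measurable_const.mul Complex.measurable_ofReal)).mul hmeas
    have hint : Integrable (fun x : ℝ => Complex.exp (Complex.I * lam * x) * h x) ν := by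
      refine Integrable.mono' (integrable_const 1) hintmeas.aestronglyMeasurable ?_
      exact ae_of_all _ fun x => le_of_eq (hnorm1 x)
    rw [hνdef, integral_sum_measure (hνdef ▸ hint)]
    refine tsum_congr fun n => ?_
    rw [integral_smul_measure, integral_dirac]
    simp only [ENNReal.smul_def, smul_eq_mul, ENNReal.coe_toReal, coe_nnnorm]
    rw [show ((2 * π * (n:ℝ) / T : ℝ) : ℂ) = ((ξ n : ℝ) : ℂ) from rfl, Complex.real_smul]
    linear_combination Complex.exp (Complex.I * lam * (ξ n : ℂ)) * hhξ n

/-- Lemma 3.6(iii): `C^{k+1}(ℝ) ⊆ W_k(ℝ)_loc`.  For every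
`f ∈ C^{k+1}(ℝ)` and every `r > 0` there is a Borel complex measure `μ` on `ℝ` (encoded in
polar form `μ(dξ) = h(ξ) ν(dξ)`, `ν = |μ|` a finite positive Borel measure, `|h| ≡ 1`) with
`∫ |ξ|^k d|μ| < ∞` such that `f(λ) = ∫_ℝ e^{iλξ} μ(dξ)` for all `λ ∈ [-r,r]`. -/
theorem stmt_14 (k : ℕ) (hk : 1 ≤ k) (f : ℝ → ℂ)
    (hf : ContDiff ℝ ((k + 1 : ℕ) : ℕ∞) f) :
    ∀ r : ℝ, 0 < r →
      ∃ (ν : Measure ℝ) (h : ℝ → ℂ),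
        IsFiniteMeasure ν ∧ Measurable h ∧ (∀ ξ, ‖h ξ‖ = 1) ∧
        (∫⁻ ξ, (‖ξ‖₊ : ℝ≥0∞) ^ k ∂ν) ≠ ∞ ∧
        ∀ lam ∈ Set.Icc (-r) r, f lam = ∫ ξ, Complex.exp (Complex.I * lam * ξ) * h ξ ∂ν := by
  intro r hr
  set π := Real.pi with hπdef
  have hπ : 0 < π := Real.pi_pos
  set T : ℝ := 2 * r + 6 with hTdef
  have hT0 : 0 < T := by positivity
  haveI hTfact : Fact (0 < T) := ⟨hT0⟩
  set a : ℝ := -(r + 3) with hadef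
  have hab : a < a + T := lt_add_of_pos_right a hT0
  have haT : a + T = r + 3 := by rw [hadef, hTdef]; ring
  -- the cutoff
  set bump : ContDiffBump (0 : ℝ) := ⟨r + 1, r + 2, by linarith, by linarith⟩ with hbump
  set g : ℝ → ℂ := fun x => bump x • f x with hgdef
  have hg : ContDiff ℝ ((k + 1 : ℕ) : ℕ∞) g := (bump.contDiff).smul hf
  have hgf : ∀ x ∈ Set.Icc (-r) r, g x = f x := by
    intro x hx
    have : bump x = 1 := bump.one_of_mem_closedBall (by
      simp only [Metric.mem_closedBall, Real.dist_eq, sub_zero]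
      rw [abs_le]; constructor <;> [linarith [hx.1]; linarith [hx.2]])
    simp [hgdef, this]
  have hsupp : ∀ j : ℕ, ∀ x : ℝ, r + 2 < |x| → iteratedDeriv j g x = 0 := by
    have base : Function.support g ⊆ Metric.closedBall 0 (r + 2) := by
      intro x hx
      have hb : bump x ≠ 0 := fun h => hx (by simp [hgdef, h])
      have := bump.support_eq ▸ Function.mem_support.2 hb
      exact Metric.ball_subset_closedBall this
    have key : ∀ j : ℕ, Function.support (iteratedDeriv j g) ⊆ Metric.closedBall 0 (r + 2) := by
      intro j; induction j with
      | zero => simpa [iteratedDeriv_zero] using base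
      | succ j ih =>
        rw [iteratedDeriv_succ]
        exact support_deriv_subset.trans (closure_minimal ih Metric.isClosed_closedBall)
    intro j x hx
    by_contra hne
    have := key j (Function.mem_support.2 hne)
    simp only [Metric.mem_closedBall, Real.dist_eq, sub_zero] at this
    linarith
  have hbd : ∀ j : ℕ, iteratedDeriv j g a = 0 ∧ iteratedDeriv j g (a + T) = 0 := by
    intro j
    constructor
    · apply hsupp j
      rw [hadef, abs_neg, abs_of_pos (by linarith)]
      linarith
    · apply hsupp j
      rw [haT, abs_of_pos (by linarith)]
      linarith
  -- coefficients
  set c : ℤ → ℂ := fun n => fourierCoeffOn hab g n with hcdef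
  set A : ℤ → ℂ := fun n => fourierCoeffOn hab (iteratedDeriv (k + 1) g) n with hAdef
  -- the iterated integration-by-parts identity
  have step : ∀ j : ℕ, j ≤ k → ∀ n : ℤ, n ≠ 0 →
      fourierCoeffOn hab (iteratedDeriv j g) n
        = ((T : ℂ) / (2 * π * Complex.I * n)) * fourierCoeffOn hab (iteratedDeriv (j + 1) g) n := by
    intro j hj n hn
    have hdiff : Differentiable ℝ (iteratedDeriv j g) := by
      apply hg.differentiable_iteratedDeriv j
      exact_mod_cast Nat.lt_succ_of_le hj
    have h1 : ∀ x ∈ Set.uIcc a (a + T),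
        HasDerivAt (iteratedDeriv j g) (iteratedDeriv (j + 1) g x) x := by
      intro x _
      rw [iteratedDeriv_succ]
      exact (hdiff x).hasDerivAt
    have h2 : IntervalIntegrable (iteratedDeriv (j + 1) g) volume a (a + T) :=
      (hg.continuous_iteratedDeriv (j + 1)
        (by exact_mod_cast Nat.succ_le_succ hj)).intervalIntegrable a (a + T)
    have hform := fourierCoeffOn_of_hasDerivAt hab hn h1 h2
    rw [(hbd j).1, (hbd j).2] at hform
    rw [hform]
    have hπC : (π : ℂ) ≠ 0 := Complex.ofReal_ne_zero.2 (ne_of_gt hπ)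
    have hnC : (n : ℂ) ≠ 0 := Int.cast_ne_zero.2 hn
    push_cast
    field_simp
    rw [← hπdef]
    ring
  have chain : ∀ n : ℤ, n ≠ 0 →
      c n = ((T : ℂ) / (2 * π * Complex.I * n)) ^ (k + 1) * A n := by
    suffices H : ∀ j : ℕ, j ≤ k + 1 → ∀ n : ℤ, n ≠ 0 →
        c n = ((T : ℂ) / (2 * π * Complex.I * n)) ^ j
          * fourierCoeffOn hab (iteratedDeriv j g) n by
      intro n hn; exact H (k + 1) le_rfl n hn
    intro j
    induction j with
    | zero => intro _ n _; simp [hcdef, iteratedDeriv_zero]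
    | succ j ih =>
      intro hj n hn
      rw [ih (by omega) n hn, step j (by omega) n hn, pow_succ]
      ring
  -- Parseval for the top derivative
  have hA2 : Summable (fun n : ℤ => ‖A n‖ ^ 2) := by
    have hcont : Continuous (iteratedDeriv (k + 1) g) :=
      hg.continuous_iteratedDeriv (k + 1) le_rfl
    exact aux_parseval T a hT0 _ hcont (hbd (k + 1)).1 (hbd (k + 1)).2
  -- coefficient bound
  have hb : ∀ n : ℤ, n ≠ 0 → ‖c n‖ * |(n : ℝ)| ^ (k + 1) ≤ (T / (2 * π)) ^ (k + 1) * ‖A n‖ := by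
    intro n hn
    have hN0 : |(n : ℝ)| ≠ 0 := by
      simp only [abs_ne_zero]
      exact_mod_cast hn
    have hznorm : ‖(T : ℂ) / (2 * π * Complex.I * n)‖ = T / (2 * π * |(n : ℝ)|) := by
      rw [norm_div]
      simp only [norm_mul, Complex.norm_I, Complex.norm_real, Real.norm_eq_abs,
        Complex.norm_intCast, Complex.norm_ofNat, mul_one]
      rw [abs_of_pos hT0, abs_of_pos hπ]
      try rw [Int.norm_eq_abs]
      try push_cast
      try ring
    have key : (T / (2 * π * |(n : ℝ)|)) ^ (k + 1) * |(n : ℝ)| ^ (k + 1)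
        = (T / (2 * π)) ^ (k + 1) := by
      rw [← mul_pow]
      congr 1
      field_simp
    rw [chain n hn, norm_mul, norm_pow, hznorm]
    refine le_of_eq ?_
    calc (T / (2 * π * |(n : ℝ)|)) ^ (k + 1) * ‖A n‖ * |(n : ℝ)| ^ (k + 1)
        = (T / (2 * π * |(n : ℝ)|)) ^ (k + 1) * |(n : ℝ)| ^ (k + 1) * ‖A n‖ := by ring
      _ = (T / (2 * π)) ^ (k + 1) * ‖A n‖ := by rw [key]
  have hS : Summable (fun n : ℤ => (1 + |(n : ℝ)| ^ k) * ‖c n‖) :=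
    aux_summable k hk c A ((T / (2 * π)) ^ (k + 1)) (by positivity) hA2 hb
  -- get the measure
  obtain ⟨ν, h, hfin, hmeas, hnorm, hlint, hint⟩ := aux_measure k T hT0 c hS
  refine ⟨ν, h, hfin, hmeas, hnorm, hlint, ?_⟩
  intro lam hlam
  rw [hint lam]
  -- now identify the sum with f lam via the Fourier series
  have hc1 : Summable c := by
    apply Summable.of_norm
    refine hS.of_nonneg_of_le (fun n => norm_nonneg _) (fun n => ?_)
    have h1 : (1:ℝ) ≤ 1 + |(n:ℝ)| ^ k := le_add_of_nonneg_right (by positivity)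
    nlinarith [norm_nonneg (c n)]
  have hgcont : Continuous g := hg.continuous
  have hga : g a = 0 := by
    have := (hbd 0).1
    rwa [iteratedDeriv_zero] at this
  have hgb : g (a + T) = 0 := by
    have := (hbd 0).2
    rwa [iteratedDeriv_zero] at this
  have hcont : Continuous (AddCircle.liftIco T a g) :=
    AddCircle.liftIco_continuous (by rw [hga, hgb]) hgcont.continuousOn
  set Fc : C(AddCircle T, ℂ) := ⟨AddCircle.liftIco T a g, hcont⟩ with hFcdef
  have hcoeff : ∀ n : ℤ, fourierCoeff (Fc : AddCircle T → ℂ) n = c n := by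
    intro n
    exact fourierCoeff_liftIco_eq (T := T) g n
  have hsumF : Summable (fourierCoeff (Fc : AddCircle T → ℂ)) := by
    refine hc1.congr fun n => (hcoeff n).symm
  have hHS := has_pointwise_sum_fourier_series_of_summable hsumF (lam : AddCircle T)
  have hFval : Fc ((lam : ℝ) : AddCircle T) = f lam := by
    have hmem : lam ∈ Set.Ico a (a + T) := by
      constructor
      · rw [hadef]; linarith [hlam.1]
      · rw [haT]; linarith [hlam.2]
    show AddCircle.liftIco T a g lam = f lam
    rw [AddCircle.liftIco_coe_apply hmem]
    exact hgf lam hlam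
  rw [← hFval, ← hHS.tsum_eq]
  refine tsum_congr fun n => ?_
  rw [hcoeff n, smul_eq_mul]
  congr 1
  rw [fourier_coe_apply]
  congr 1
  push_cast
  have hTC : (T : ℂ) ≠ 0 := Complex.ofReal_ne_zero.2 (ne_of_gt hT0)
  field_simp
end

section
/- Fix k ∈ ℕ and 0 ≤ j ≤ k. Let μ be a Borel complex measure on ℝ with μ_{(k)} := ∫_ℝ |ξ|^k |μ|(dξ) < ∞, and let f(λ) := ∫_ℝ e^{iλξ} μ(dξ). Then f ∈ C^k(ℝ) and the divided difference f^{[j]} : ℝ^{j+1} → ℂ has ℓ^∞-integral projective tensor norm (with Ω_1 = ⋯ = Ω_{j+1} = ℝ) at most μ_{(j)}/j!, where μ_{(j)} := ∫_ℝ |ξ|^j |μ|(dξ). In particular, W_k(ℝ) ⊆ 𝒞^{[k]}(ℝ). -/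
open MeasureTheory Filter
open scoped ENNReal NNReal

def simplexSet (n : ℕ) (r : ℝ) : Set (Fin n → ℝ) :=
  {s : Fin n → ℝ | (∀ i, 0 ≤ s i) ∧ ∑ i, s i ≤ r}

lemma measurableSet_simplexSet (n : ℕ) (r : ℝ) : MeasurableSet (simplexSet n r) := by
  have h1 : MeasurableSet {s : Fin n → ℝ | ∀ i, 0 ≤ s i} := by
    have : {s : Fin n → ℝ | ∀ i, 0 ≤ s i} = ⋂ i, {s | 0 ≤ s i} := by
      ext s; simp [Set.mem_iInter]
    rw [this]
    exact MeasurableSet.iInter fun i => measurableSet_le measurable_const (measurable_pi_apply i)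
  have h2 : MeasurableSet {s : Fin n → ℝ | ∑ i, s i ≤ r} :=
    measurableSet_le (Finset.measurable_sum _ fun i _ => measurable_pi_apply i) measurable_const
  exact h1.inter h2

lemma simplexSet_eq_empty (n : ℕ) (r : ℝ) (hr : r < 0) : simplexSet n r = ∅ := by
  ext s
  simp only [simplexSet, Set.mem_setOf_eq, Set.mem_empty_iff_false, iff_false, not_and]
  intro h1 h2
  have : (0:ℝ) ≤ ∑ i, s i := Finset.sum_nonneg fun i _ => h1 i
  linarith

lemma volume_simplexSet (n : ℕ) : ∀ r : ℝ, 0 ≤ r →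
    volume (simplexSet n r) = ENNReal.ofReal (r ^ n / n.factorial) := by
  induction n with
  | zero =>
    intro r hr
    have : simplexSet 0 r = Set.univ := by
      ext s; simp [simplexSet, hr]
    rw [this, MeasureTheory.volume_pi, MeasureTheory.Measure.pi_univ]
    simp
  | succ n ih =>
    intro r hr
    set T : Set (ℝ × (Fin n → ℝ)) :=
      {p | 0 ≤ p.1 ∧ (∀ i, 0 ≤ p.2 i) ∧ p.1 + ∑ i, p.2 i ≤ r} with hT
    have hev : ∀ i : Fin n, Measurable fun p : ℝ × (Fin n → ℝ) => p.2 i :=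
      fun i => (measurable_pi_apply i).comp measurable_snd
    have hTmeas : MeasurableSet T := by
      apply MeasurableSet.inter
      · exact measurableSet_le measurable_const measurable_fst
      apply MeasurableSet.inter
      · show MeasurableSet {p : ℝ × (Fin n → ℝ) | ∀ i, 0 ≤ p.2 i}
        have : {p : ℝ × (Fin n → ℝ) | ∀ i, 0 ≤ p.2 i} = ⋂ i, {p | 0 ≤ p.2 i} := by
          ext p; simp [Set.mem_iInter]
        rw [this]
        exact MeasurableSet.iInter fun i =>
          measurableSet_le measurable_const (hev i)
      · exact measurableSet_le
          (measurable_fst.add (Finset.measurable_sum _ fun i _ => hev i)) measurable_const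
    have hpre : (MeasurableEquiv.piFinSuccAbove (fun _ : Fin (n+1) => ℝ) 0) ⁻¹' T
        = simplexSet (n+1) r := by
      ext s
      simp only [Set.mem_preimage, MeasurableEquiv.piFinSuccAbove_apply, hT,
        Set.mem_setOf_eq, simplexSet, Fin.zero_succAbove, Fin.sum_univ_succ]
      constructor
      · rintro ⟨h0, hs, hsum⟩
        refine ⟨fun i => ?_, hsum⟩
        rcases Fin.eq_zero_or_eq_succ i with rfl | ⟨i', rfl⟩
        · exact h0
        · exact hs i'
      · rintro ⟨hs, hsum⟩
        exact ⟨hs 0, fun i => hs i.succ, hsum⟩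
    have hvol : volume (simplexSet (n+1) r) = (volume.prod volume) T := by
      rw [← hpre]
      exact (MeasureTheory.volume_preserving_piFinSuccAbove (fun _ : Fin (n+1) => ℝ) 0).measure_preimage
        hTmeas.nullMeasurableSet
    rw [hvol, MeasureTheory.Measure.prod_apply hTmeas]
    have hslice : ∀ t : ℝ, (Prod.mk t ⁻¹' T) =
        if 0 ≤ t then simplexSet n (r - t) else ∅ := by
      intro t
      split_ifs with ht
      · ext s
        simp only [Set.mem_preimage, hT, Set.mem_setOf_eq, simplexSet, ht, true_and]
        constructor
        · rintro ⟨hs, hsum⟩; exact ⟨hs, by linarith⟩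
        · rintro ⟨hs, hsum⟩; exact ⟨hs, by linarith⟩
      · ext s
        simp only [Set.mem_preimage, hT, Set.mem_setOf_eq, Set.mem_empty_iff_false, iff_false]
        rintro ⟨h0, -⟩; exact ht h0
    have hsliceval : ∀ t : ℝ,
        volume (Prod.mk t ⁻¹' T) =
          Set.indicator (Set.Icc 0 r) (fun t => ENNReal.ofReal ((r - t) ^ n / n.factorial)) t := by
      intro t
      rw [hslice t]
      by_cases ht : 0 ≤ t
      · by_cases htr : t ≤ r
        · rw [if_pos ht, ih (r - t) (by linarith), Set.indicator_of_mem (Set.mem_Icc.mpr ⟨ht, htr⟩)]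
        · have hnm : t ∉ Set.Icc (0:ℝ) r := by
            simp only [Set.mem_Icc, not_and, not_le]; intro _; linarith [lt_of_not_ge htr]
          rw [if_pos ht, simplexSet_eq_empty n (r - t) (by linarith [lt_of_not_ge htr]),
            Set.indicator_of_notMem hnm]
          simp
      · have hnm : t ∉ Set.Icc (0:ℝ) r := fun hc => ht hc.1
        rw [if_neg ht, Set.indicator_of_notMem hnm]
        simp
    rw [lintegral_congr hsliceval, lintegral_indicator measurableSet_Icc]
    have hcont : Continuous (fun t : ℝ => (r - t) ^ n / n.factorial) := by fun_prop
    rw [← MeasureTheory.ofReal_integral_eq_lintegral_ofReal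
      (hcont.integrableOn_Icc)
      (Filter.eventually_of_mem (self_mem_ae_restrict measurableSet_Icc)
        (fun t ht => by
          have : (0:ℝ) ≤ (r - t) ^ n := pow_nonneg (by linarith [ht.2]) n
          positivity))]
    congr 1
    rw [MeasureTheory.integral_Icc_eq_integral_Ioc, ← intervalIntegral.integral_of_le hr]
    have h1 : (∫ t in (0:ℝ)..r, (r - t) ^ n / n.factorial)
        = (∫ t in (0:ℝ)..r, (r - t) ^ n) / n.factorial := by
      rw [intervalIntegral.integral_div]
    rw [h1]
    have h2 : (∫ t in (0:ℝ)..r, (r - t) ^ n) = ∫ t in (0:ℝ)..r, t ^ n := by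
      have := intervalIntegral.integral_comp_sub_left (fun u : ℝ => u ^ n) r (a := 0) (b := r)
      simpa using this
    rw [h2, integral_pow]
    simp only [Nat.factorial_succ]
    push_cast
    field_simp
    simp

lemma ofReal_norm_eq_coe_nnnorm {E : Type*} [SeminormedAddCommGroup E] (a : E) :
    ENNReal.ofReal ‖a‖ = (‖a‖₊ : ℝ≥0∞) :=
  ENNReal.ofReal_eq_coe_nnreal (norm_nonneg a)

noncomputable def gInt (ν : Measure ℝ) (h : ℝ → ℂ) (m : ℕ) (x : ℝ) : ℂ :=
  ∫ ξ, (Complex.I * ξ) ^ m * Complex.exp (Complex.I * x * ξ) * h ξ ∂ν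

lemma norm_exp_I_mul (t : ℝ) : ‖Complex.exp (Complex.I * t)‖ = 1 := by
  rw [mul_comm]
  exact Complex.norm_exp_ofReal_mul_I t

lemma norm_exp_I_mul3 (a b c : ℝ) : ‖Complex.exp (Complex.I * a * b * c)‖ = 1 := by
  rw [show (Complex.I * a * b * c : ℂ) = Complex.I * ((a * b * c : ℝ) : ℂ) by push_cast; ring]
  exact norm_exp_I_mul _

lemma norm_exp_I_mul2 (a b : ℝ) : ‖Complex.exp (Complex.I * a * b)‖ = 1 := by
  rw [show (Complex.I * a * b : ℂ) = Complex.I * ((a * b : ℝ) : ℂ) by push_cast; ring]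
  exact norm_exp_I_mul _

lemma norm_integrand (h : ℝ → ℂ) (hunit : ∀ ξ, ‖h ξ‖ = 1) (m : ℕ) (x ξ : ℝ) :
    ‖(Complex.I * ξ) ^ m * Complex.exp (Complex.I * x * ξ) * h ξ‖ = ‖ξ‖ ^ m := by
  rw [norm_mul, norm_mul, norm_pow, norm_mul, Complex.norm_I, one_mul, Complex.norm_real,
    norm_exp_I_mul2, hunit, mul_one, mul_one]

lemma nnnorm_integrand (h : ℝ → ℂ) (hunit : ∀ ξ, ‖h ξ‖ = 1) (m : ℕ) (x ξ : ℝ) :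
    (‖(Complex.I * ξ) ^ m * Complex.exp (Complex.I * x * ξ) * h ξ‖₊ : ℝ≥0∞)
      = (‖ξ‖₊ : ℝ≥0∞) ^ m := by
  rw [← ofReal_norm_eq_coe_nnnorm, norm_integrand h hunit m x ξ,
    ENNReal.ofReal_pow (norm_nonneg _), ofReal_norm_eq_coe_nnnorm]

lemma mom_ne_top (ν : Measure ℝ) [IsFiniteMeasure ν] {k : ℕ}
    (hmom : (∫⁻ ξ, (‖ξ‖₊ : ℝ≥0∞) ^ k ∂ν) ≠ ∞) {m : ℕ} (hm : m ≤ k) :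
    (∫⁻ ξ, (‖ξ‖₊ : ℝ≥0∞) ^ m ∂ν) ≠ ∞ := by
  have hb : ∀ ξ : ℝ, (‖ξ‖₊ : ℝ≥0∞) ^ m ≤ 1 + (‖ξ‖₊ : ℝ≥0∞) ^ k := by
    intro ξ
    rcases le_total ((‖ξ‖₊ : ℝ≥0∞)) 1 with hle | hle
    · exact le_trans (pow_le_one' hle m) le_self_add
    · exact le_trans (pow_le_pow_right₀ hle hm) (le_add_self)
  have : (∫⁻ ξ, (‖ξ‖₊ : ℝ≥0∞) ^ m ∂ν) ≤ ∫⁻ ξ, (1 + (‖ξ‖₊ : ℝ≥0∞) ^ k) ∂ν :=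
    lintegral_mono hb
  refine ne_top_of_le_ne_top ?_ this
  rw [lintegral_add_left measurable_const, lintegral_const, one_mul]
  exact ENNReal.add_ne_top.mpr ⟨measure_ne_top ν _, hmom⟩

lemma normpow_integrable (ν : Measure ℝ) [IsFiniteMeasure ν] {k : ℕ}
    (hmom : (∫⁻ ξ, (‖ξ‖₊ : ℝ≥0∞) ^ k ∂ν) ≠ ∞) {m : ℕ} (hm : m ≤ k) :
    Integrable (fun ξ : ℝ => ‖ξ‖ ^ m) ν := by
  refine ⟨(measurable_norm.pow_const m).aestronglyMeasurable, ?_⟩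
  show (∫⁻ ξ, (‖(‖ξ‖ ^ m)‖₊ : ℝ≥0∞) ∂ν) < ∞
  have he : ∀ ξ : ℝ, (‖(‖ξ‖ ^ m)‖₊ : ℝ≥0∞) = (‖ξ‖₊ : ℝ≥0∞) ^ m := by
    intro ξ
    rw [← ofReal_norm_eq_coe_nnnorm, norm_pow, norm_norm,
      ENNReal.ofReal_pow (norm_nonneg _), ofReal_norm_eq_coe_nnnorm]
  rw [lintegral_congr he]
  exact (mom_ne_top ν hmom hm).lt_top

lemma integrand_measurable (h : ℝ → ℂ) (hmeas : Measurable h) (m : ℕ) (x : ℝ) :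
    Measurable (fun ξ : ℝ => (Complex.I * ξ) ^ m * Complex.exp (Complex.I * x * ξ) * h ξ) := by
  have m1 : Measurable fun ξ : ℝ => (Complex.I * (ξ : ℂ)) ^ m :=
    (measurable_const.mul Complex.measurable_ofReal).pow_const m
  have m2 : Measurable fun ξ : ℝ => Complex.exp (Complex.I * x * ξ) :=
    Complex.measurable_exp.comp (measurable_const.mul Complex.measurable_ofReal)
  exact (m1.mul m2).mul hmeas

lemma integrand_integrable (ν : Measure ℝ) [IsFiniteMeasure ν] {k : ℕ}
    (h : ℝ → ℂ) (hmeas : Measurable h) (hunit : ∀ ξ, ‖h ξ‖ = 1)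
    (hmom : (∫⁻ ξ, (‖ξ‖₊ : ℝ≥0∞) ^ k ∂ν) ≠ ∞) {m : ℕ} (hm : m ≤ k) (x : ℝ) :
    Integrable (fun ξ : ℝ => (Complex.I * ξ) ^ m * Complex.exp (Complex.I * x * ξ) * h ξ) ν := by
  refine ⟨(integrand_measurable h hmeas m x).aestronglyMeasurable, ?_⟩
  show (∫⁻ ξ, (‖_‖₊ : ℝ≥0∞) ∂ν) < ∞
  rw [lintegral_congr (fun ξ => nnnorm_integrand h hunit m x ξ)]
  exact (mom_ne_top ν hmom hm).lt_top

lemma gInt_hasDerivAt (ν : Measure ℝ) [IsFiniteMeasure ν] {k : ℕ}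
    (h : ℝ → ℂ) (hmeas : Measurable h) (hunit : ∀ ξ, ‖h ξ‖ = 1)
    (hmom : (∫⁻ ξ, (‖ξ‖₊ : ℝ≥0∞) ^ k ∂ν) ≠ ∞) {m : ℕ} (hm : m + 1 ≤ k) (x₀ : ℝ) :
    HasDerivAt (gInt ν h m) (gInt ν h (m + 1) x₀) x₀ := by
  have key := hasDerivAt_integral_of_dominated_loc_of_deriv_le (μ := ν) (x₀ := x₀)
    (F := fun (x ξ : ℝ) => (Complex.I * ξ) ^ m * Complex.exp (Complex.I * x * ξ) * h ξ)
    (F' := fun (x ξ : ℝ) => (Complex.I * ξ) ^ (m + 1) * Complex.exp (Complex.I * x * ξ) * h ξ)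
    (bound := fun ξ => ‖ξ‖ ^ (m + 1)) (s := Metric.ball x₀ 1) (Metric.ball_mem_nhds x₀ one_pos)
    (Filter.Eventually.of_forall fun x : ℝ => (integrand_measurable h hmeas m x).aestronglyMeasurable)
    (integrand_integrable ν h hmeas hunit hmom (Nat.le_of_succ_le hm) x₀)
    ((integrand_measurable h hmeas (m + 1) x₀).aestronglyMeasurable)
    (Filter.Eventually.of_forall fun ξ : ℝ => fun (x : ℝ) _ =>
      le_of_eq (norm_integrand h hunit (m + 1) x ξ))
    (normpow_integrable ν hmom hm)
    (Filter.Eventually.of_forall fun ξ : ℝ => fun (x : ℝ) _ => by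
      have h1 : HasDerivAt (fun x : ℝ => (x : ℂ)) 1 x := by
        simpa using (hasDerivAt_id x).ofReal_comp
      have h2 : HasDerivAt (fun x : ℝ => Complex.I * x * ξ) (Complex.I * ξ) x := by
        simpa [mul_assoc, mul_comm, mul_left_comm] using (h1.const_mul Complex.I).mul_const (ξ : ℂ)
      have h3 := ((h2.cexp.const_mul ((Complex.I * ξ) ^ m)).mul_const (h ξ))
      exact h3.congr_deriv (by ring))
  exact key.2

lemma gInt_continuous (ν : Measure ℝ) [IsFiniteMeasure ν] {k : ℕ}
    (h : ℝ → ℂ) (hmeas : Measurable h) (hunit : ∀ ξ, ‖h ξ‖ = 1)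
    (hmom : (∫⁻ ξ, (‖ξ‖₊ : ℝ≥0∞) ^ k ∂ν) ≠ ∞) {m : ℕ} (hm : m ≤ k) :
    Continuous (gInt ν h m) := by
  apply continuous_of_dominated
    (F := fun (x ξ : ℝ) => (Complex.I * ξ) ^ m * Complex.exp (Complex.I * x * ξ) * h ξ)
    (bound := fun ξ => ‖ξ‖ ^ m)
  · exact fun x => (integrand_measurable h hmeas m x).aestronglyMeasurable
  · exact fun x => Filter.Eventually.of_forall fun ξ =>
      le_of_eq (norm_integrand h hunit m x ξ)
  · exact normpow_integrable ν hmom hm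
  · refine Filter.Eventually.of_forall fun ξ => ?_
    have : Continuous fun x : ℝ => Complex.exp (Complex.I * x * ξ) :=
      Complex.continuous_exp.comp
        (((continuous_const).mul Complex.continuous_ofReal).mul continuous_const)
    exact (continuous_const.mul this).mul continuous_const

lemma gInt_contDiff (ν : Measure ℝ) [IsFiniteMeasure ν] {k : ℕ}
    (h : ℝ → ℂ) (hmeas : Measurable h) (hunit : ∀ ξ, ‖h ξ‖ = 1)
    (hmom : (∫⁻ ξ, (‖ξ‖₊ : ℝ≥0∞) ^ k ∂ν) ≠ ∞) :
    ∀ d m : ℕ, m + d ≤ k → ContDiff ℝ (d : ℕ∞) (gInt ν h m) := by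
  intro d
  induction d with
  | zero =>
    intro m hm
    rw [show ((0 : ℕ) : ℕ∞) = 0 by norm_cast]
    exact contDiff_zero.mpr (gInt_continuous ν h hmeas hunit hmom (by omega))
  | succ d ih =>
    intro m hm
    have hd : ∀ x, HasDerivAt (gInt ν h m) (gInt ν h (m + 1) x) x :=
      fun x => gInt_hasDerivAt ν h hmeas hunit hmom (by omega) x
    have hderiv : deriv (gInt ν h m) = gInt ν h (m + 1) := funext fun x => (hd x).deriv
    have : ContDiff ℝ ((d : ℕ∞) + 1) (gInt ν h m) := by
      rw [contDiff_succ_iff_deriv]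
      refine ⟨fun x => (hd x).differentiableAt, ?_, ?_⟩
      · intro hω; exact absurd hω (by simp)
      · rw [hderiv]; exact ih (m + 1) (by omega)
    exact_mod_cast this

/-- The continuous extension of the `k`-th divided difference of a `C^k` function, given by
integration of the `k`-th derivative over the standard simplex (Proposition 2.3(ii)). -/
noncomputable def divDiffC (f : ℝ → ℂ) (k : ℕ) (lam : Fin (k + 1) → ℝ) : ℂ :=
  ∫ s in {s : Fin k → ℝ | (∀ i, 0 ≤ s i) ∧ ∑ i, s i ≤ 1},
    iteratedDeriv k f
      ((∑ i : Fin k, s i * lam i.castSucc) + (1 - ∑ i : Fin k, s i) * lam (Fin.last k))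

/-- The `ℓ^∞`-integral projective tensor norm of a function `φ : Ω_1 × ⋯ × Ω_m → ℂ`:
the infimum, over all `ℓ^∞`-integral projective decompositions
`(Σ, ρ, φ_1, …, φ_m)` of `φ` (with `ρ` a σ-finite measure, the `φ_j` product-measurable and
bounded in the first variable, and `φ(ω) = ∫_Σ ∏_j φ_j(ω_j, σ) ρ(dσ)`), of
`∫_Σ ∏_j sup_{ω_j} |φ_j(ω_j, σ)| ρ(dσ)`; it is `∞` if no decomposition exists. -/
noncomputable def iptNorm {m : ℕ} {Ω : Fin m → Type*} [∀ i, MeasurableSpace (Ω i)]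
    (φ : (∀ i, Ω i) → ℂ) : ℝ≥0∞ :=
  sInf {c : ℝ≥0∞ |
    ∃ (S : Type) (_ : MeasurableSpace S) (ρ : MeasureTheory.Measure S)
      (φs : ∀ i, Ω i × S → ℂ),
      MeasureTheory.SigmaFinite ρ ∧ (∀ i, Measurable (φs i)) ∧
      (∀ i σ, ∃ C : ℝ, ∀ ω, ‖φs i (ω, σ)‖ ≤ C) ∧
      (∫⁻ σ, ∏ i, ⨆ ω, (‖φs i (ω, σ)‖₊ : ℝ≥0∞) ∂ρ) ≠ ∞ ∧
      (∀ ω : ∀ i, Ω i, φ ω = ∫ σ, ∏ i, φs i (ω i, σ) ∂ρ) ∧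
      c = ∫⁻ σ, ∏ i, ⨆ ω, (‖φs i (ω, σ)‖₊ : ℝ≥0∞) ∂ρ}

/-- `‖φ‖_{r,m}` : the `ℓ^∞`-integral projective tensor norm of `φ` restricted to `[-r,r]^m`. -/
noncomputable def iptNormIcc (r : ℝ) {m : ℕ} (φ : (Fin m → ℝ) → ℂ) : ℝ≥0∞ :=
  iptNorm (Ω := fun _ : Fin m => (Set.Icc (-r) r : Set ℝ)) fun ω => φ fun i => (ω i : ℝ)

/-- `‖f‖_{𝒞^{[k]},r} = ∑_{j=0}^k ‖f^{[j]}‖_{r,j+1}`. -/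
noncomputable def cNorm (k : ℕ) (r : ℝ) (f : ℝ → ℂ) : ℝ≥0∞ :=
  ∑ j ∈ Finset.range (k + 1), iptNormIcc r (divDiffC f j)


lemma divDiff_bound (ν : Measure ℝ) [IsFiniteMeasure ν] {k : ℕ}
    (h : ℝ → ℂ) (hmeas : Measurable h) (hunit : ∀ ξ, ‖h ξ‖ = 1)
    (hmom : (∫⁻ ξ, (‖ξ‖₊ : ℝ≥0∞) ^ k ∂ν) ≠ ∞)
    (f : ℝ → ℂ) (hiter : ∀ m, m ≤ k → iteratedDeriv m f = gInt ν h m)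
    {m : ℕ} (hm : m ≤ k) :
    iptNorm (Ω := fun _ : Fin (m + 1) => ℝ) (divDiffC f m) ≤
      (∫⁻ ξ, (‖ξ‖₊ : ℝ≥0∞) ^ m ∂ν) / (m.factorial : ℝ≥0∞) := by
  classical
  set M : ℝ≥0∞ := ∫⁻ ξ, (‖ξ‖₊ : ℝ≥0∞) ^ m ∂ν with hMdef
  have hMne : M ≠ ∞ := mom_ne_top ν hmom hm
  set μS : Measure (Fin m → ℝ) := volume.restrict (simplexSet m 1) with hμS
  have hμSuniv : μS Set.univ = ENNReal.ofReal (1 / m.factorial) := by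
    rw [hμS, Measure.restrict_apply_univ, volume_simplexSet m 1 zero_le_one, one_pow]
  haveI : IsFiniteMeasure μS := ⟨by rw [hμSuniv]; exact ENNReal.ofReal_lt_top⟩
  set ρ : Measure ((Fin m → ℝ) × ℝ) := μS.prod ν with hρ
  have hsnd : (∫⁻ σ : (Fin m → ℝ) × ℝ, (‖σ.2‖₊ : ℝ≥0∞) ^ m ∂ρ)
      = ENNReal.ofReal (1 / m.factorial) * M := by
    rw [hρ, MeasureTheory.lintegral_prod _
      ((measurable_snd.nnnorm.coe_nnreal_ennreal.pow_const m).aemeasurable)]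
    simp only [hMdef.symm]
    rw [lintegral_const, hμSuniv, mul_comm]
  set φs : ∀ _ : Fin (m + 1), ℝ × ((Fin m → ℝ) × ℝ) → ℂ := fun i p =>
    if hi : (i : ℕ) < m then Complex.exp (Complex.I * p.2.1 ⟨i, hi⟩ * p.1 * p.2.2)
    else (Complex.I * p.2.2) ^ m * h p.2.2 *
      Complex.exp (Complex.I * ((1 - ∑ l, p.2.1 l : ℝ) : ℂ) * p.1 * p.2.2) with hφs
  have hsup : ∀ σ : (Fin m → ℝ) × ℝ,
      (∏ i : Fin (m + 1), ⨆ ω : ℝ, (‖φs i (ω, σ)‖₊ : ℝ≥0∞)) = (‖σ.2‖₊ : ℝ≥0∞) ^ m := by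
    intro σ
    rw [Fin.prod_univ_castSucc]
    have h1 : ∀ i : Fin m, (⨆ ω : ℝ, (‖φs i.castSucc (ω, σ)‖₊ : ℝ≥0∞)) = 1 := by
      intro i
      have he : ∀ ω : ℝ, (‖φs i.castSucc (ω, σ)‖₊ : ℝ≥0∞) = 1 := by
        intro ω
        rw [hφs]
        simp only
        rw [dif_pos (show ((i.castSucc : Fin (m + 1)) : ℕ) < m by simpa using i.isLt)]
        rw [← ofReal_norm_eq_coe_nnnorm, norm_exp_I_mul3, ENNReal.ofReal_one]
      simp only [he, iSup_const]
    have h2 : (⨆ ω : ℝ, (‖φs (Fin.last m) (ω, σ)‖₊ : ℝ≥0∞)) = (‖σ.2‖₊ : ℝ≥0∞) ^ m := by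
      have he : ∀ ω : ℝ, (‖φs (Fin.last m) (ω, σ)‖₊ : ℝ≥0∞) = (‖σ.2‖₊ : ℝ≥0∞) ^ m := by
        intro ω
        rw [hφs]
        simp only
        rw [dif_neg (by simp)]
        rw [← ofReal_norm_eq_coe_nnnorm, norm_mul, norm_mul, norm_pow, norm_mul,
          Complex.norm_I, one_mul, Complex.norm_real, norm_exp_I_mul3, hunit, mul_one, mul_one,
          ENNReal.ofReal_pow (norm_nonneg _), ofReal_norm_eq_coe_nnnorm]
      simp only [he, iSup_const]
    rw [Finset.prod_congr rfl (fun i _ => h1 i), Finset.prod_const_one, one_mul, h2]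
  have hLcalc : (∫⁻ σ, ∏ i : Fin (m + 1), ⨆ ω : ℝ, (‖φs i (ω, σ)‖₊ : ℝ≥0∞) ∂ρ)
      = ENNReal.ofReal (1 / m.factorial) * M := by
    rw [lintegral_congr hsup, hsnd]
  have hbound : ∀ i σ, ∃ C : ℝ, ∀ ω : ℝ, ‖φs i (ω, σ)‖ ≤ C := by
    intro i σ
    by_cases hi : (i : ℕ) < m
    · refine ⟨1, fun ω => ?_⟩
      rw [hφs]; simp only
      rw [dif_pos hi, norm_exp_I_mul3]
    · refine ⟨‖σ.2‖ ^ m, fun ω => ?_⟩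
      rw [hφs]; simp only
      rw [dif_neg hi]
      rw [norm_mul, norm_mul, norm_pow, norm_mul, Complex.norm_I, one_mul, Complex.norm_real,
        norm_exp_I_mul3, hunit, mul_one, mul_one]
  have hmeasφ : ∀ i, Measurable (φs i) := by
    intro i
    have hξm : Measurable fun p : ℝ × ((Fin m → ℝ) × ℝ) => p.2.2 :=
      measurable_snd.comp measurable_snd
    by_cases hi : (i : ℕ) < m
    · simp only [hφs, dif_pos hi]
      have hc : Measurable fun p : ℝ × ((Fin m → ℝ) × ℝ) => p.2.1 ⟨i, hi⟩ :=
        (measurable_pi_apply _).comp (measurable_fst.comp measurable_snd)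
      exact Complex.measurable_exp.comp
        (((measurable_const.mul (Complex.measurable_ofReal.comp hc)).mul
          (Complex.measurable_ofReal.comp measurable_fst)).mul
          (Complex.measurable_ofReal.comp hξm))
    · simp only [hφs, dif_neg hi]
      have hsum : Measurable fun p : ℝ × ((Fin m → ℝ) × ℝ) => (1 - ∑ l, p.2.1 l : ℝ) :=
        measurable_const.sub (Finset.measurable_sum _ fun l _ =>
          (measurable_pi_apply _).comp (measurable_fst.comp measurable_snd))
      exact (((measurable_const.mul (Complex.measurable_ofReal.comp hξm)).pow_const m).mul
        (hmeas.comp hξm)).mul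
        (Complex.measurable_exp.comp
          (((measurable_const.mul (Complex.measurable_ofReal.comp hsum)).mul
            (Complex.measurable_ofReal.comp measurable_fst)).mul
            (Complex.measurable_ofReal.comp hξm)))
  have hdecomp : ∀ lam : Fin (m + 1) → ℝ,
      divDiffC f m lam = ∫ σ, ∏ i, φs i (lam i, σ) ∂ρ := by
    intro lam
    set X : (Fin m → ℝ) → ℝ := fun s =>
      (∑ i, s i * lam i.castSucc) + (1 - ∑ i, s i) * lam (Fin.last m) with hXdef
    have hXcont : Continuous X := by
      apply Continuous.add
      · exact continuous_finset_sum _ fun i _ => (continuous_apply i).mul continuous_const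
      · exact ((continuous_const.sub (continuous_finset_sum _ fun i _ =>
          continuous_apply i)).mul continuous_const)
    set F : (Fin m → ℝ) × ℝ → ℂ := fun σ =>
      (Complex.I * σ.2) ^ m * Complex.exp (Complex.I * X σ.1 * σ.2) * h σ.2 with hFdef
    have hFmeas : Measurable F := by
      have hξ : Measurable fun σ : (Fin m → ℝ) × ℝ => σ.2 := measurable_snd
      exact (((measurable_const.mul (Complex.measurable_ofReal.comp hξ)).pow_const m).mul
        (Complex.measurable_exp.comp
          ((measurable_const.mul (Complex.measurable_ofReal.comp
            (hXcont.measurable.comp measurable_fst))).mul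
            (Complex.measurable_ofReal.comp hξ)))).mul (hmeas.comp hξ)
    have hFnn : ∀ σ : (Fin m → ℝ) × ℝ, (‖F σ‖₊ : ℝ≥0∞) = (‖σ.2‖₊ : ℝ≥0∞) ^ m := fun σ =>
      nnnorm_integrand h hunit m (X σ.1) σ.2
    have hFint : Integrable F ρ := by
      refine ⟨hFmeas.aestronglyMeasurable, ?_⟩
      show (∫⁻ σ, (‖F σ‖₊ : ℝ≥0∞) ∂ρ) < ∞
      rw [lintegral_congr hFnn, hsnd]
      exact ENNReal.mul_lt_top ENNReal.ofReal_lt_top hMne.lt_top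
    have hprodeq : ∀ σ : (Fin m → ℝ) × ℝ, (∏ i, φs i (lam i, σ)) = F σ := by
      rintro ⟨s, ξ⟩
      rw [Fin.prod_univ_castSucc]
      have hc : ∀ i : Fin m, φs i.castSucc (lam i.castSucc, (s, ξ))
          = Complex.exp (Complex.I * s i * lam i.castSucc * ξ) := by
        intro i
        rw [hφs]
        simp only
        rw [dif_pos (show ((i.castSucc : Fin (m + 1)) : ℕ) < m by simpa using i.isLt)]
        have hidx : (⟨((i.castSucc : Fin (m + 1)) : ℕ), by simpa using i.isLt⟩ : Fin m) = i :=
          Fin.ext (by simp)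
        rw [hidx]
      rw [Finset.prod_congr rfl fun i _ => hc i, ← Complex.exp_sum]
      rw [hφs]
      simp only
      rw [dif_neg (by simp)]
      have key : Complex.exp (∑ i : Fin m, Complex.I * s i * lam i.castSucc * ξ)
          * Complex.exp (Complex.I * ((1 - ∑ l, s l : ℝ) : ℂ) * lam (Fin.last m) * ξ)
          = Complex.exp (Complex.I * X s * ξ) := by
        rw [← Complex.exp_add]
        congr 1
        have hs1 : (∑ i : Fin m, Complex.I * (s i : ℂ) * (lam i.castSucc : ℂ) * (ξ : ℂ))
            = Complex.I * ((∑ i, s i * lam i.castSucc : ℝ) : ℂ) * ξ := by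
          push_cast
          rw [Finset.mul_sum, Finset.sum_mul]
          exact Finset.sum_congr rfl fun i _ => by ring
        rw [hs1, hXdef]
        push_cast
        ring
      rw [hFdef]
      simp only
      rw [← key]
      ring
    calc divDiffC f m lam = ∫ s, ∫ ξ, F (s, ξ) ∂ν ∂μS := by
          simp only [divDiffC]
          rw [hiter m hm]
          rfl
      _ = ∫ σ, F σ ∂ρ := by rw [hρ]; exact (MeasureTheory.integral_prod F (hρ ▸ hFint)).symm
      _ = ∫ σ, ∏ i, φs i (lam i, σ) ∂ρ :=
          integral_congr_ae (Filter.Eventually.of_forall fun σ => (hprodeq σ).symm)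
  have hle : iptNorm (Ω := fun _ : Fin (m + 1) => ℝ) (divDiffC f m)
      ≤ ∫⁻ σ, ∏ i : Fin (m + 1), ⨆ ω : ℝ, (‖φs i (ω, σ)‖₊ : ℝ≥0∞) ∂ρ := by
    refine sInf_le ?_
    refine ⟨(Fin m → ℝ) × ℝ, inferInstance, ρ, φs, inferInstance, hmeasφ, hbound, ?_, hdecomp, rfl⟩
    rw [hLcalc]
    exact ENNReal.mul_ne_top ENNReal.ofReal_ne_top hMne
  refine le_trans hle ?_
  rw [hLcalc]
  have : ENNReal.ofReal (1 / m.factorial) * M = M / (m.factorial : ℝ≥0∞) := by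
    rw [div_eq_mul_inv, mul_comm]
    congr 1
    rw [one_mul, ENNReal.ofReal_inv_of_pos (by positivity), ENNReal.ofReal_natCast]
  rw [this]

lemma iptNormIcc_le (r : ℝ) {m : ℕ} (φ : (Fin m → ℝ) → ℂ) :
    iptNormIcc r φ ≤ iptNorm (Ω := fun _ : Fin m => ℝ) φ := by
  apply le_sInf
  rintro c ⟨S, iS, ρ, φs, hσf, hmeasφ, hbd, hfin, heq, rfl⟩
  set ψ : ∀ _ : Fin m, (Set.Icc (-r) r : Set ℝ) × S → ℂ :=
    fun i p => φs i ((p.1 : ℝ), p.2) with hψ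
  have hle : (∫⁻ σ, ∏ i, ⨆ ω : (Set.Icc (-r) r : Set ℝ), (‖ψ i (ω, σ)‖₊ : ℝ≥0∞) ∂ρ)
      ≤ ∫⁻ σ, ∏ i, ⨆ ω : ℝ, (‖φs i (ω, σ)‖₊ : ℝ≥0∞) ∂ρ := by
    apply lintegral_mono
    intro σ
    apply Finset.prod_le_prod'
    intro i _
    exact iSup_le fun ω => le_iSup (fun ω : ℝ => (‖φs i (ω, σ)‖₊ : ℝ≥0∞)) (ω : ℝ)
  refine le_trans (sInf_le ?_) hle
  refine ⟨S, iS, ρ, ψ, hσf, ?_, ?_, ne_top_of_le_ne_top hfin hle, ?_, rfl⟩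
  · exact fun i => (hmeasφ i).comp
      ((measurable_subtype_coe.comp measurable_fst).prodMk measurable_snd)
  · intro i σ
    obtain ⟨C, hC⟩ := hbd i σ
    exact ⟨C, fun ω => hC (ω : ℝ)⟩
  · intro ω
    exact heq fun i => (ω i : ℝ)

/-- Lemma 3.7: if `μ` is a Borel complex measure (encoded in polar form
`μ(dξ) = h(ξ) ν(dξ)`, `ν = |μ|`, `|h| ≡ 1`) with `μ_{(k)} = ∫ |ξ|^k d|μ| < ∞` and
`f(λ) = ∫_ℝ e^{iλξ} μ(dξ)`, then `f ∈ C^k(ℝ)` and, for `0 ≤ j ≤ k`, the (continuous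
extension of the) divided difference `f^{[j]} : ℝ^{j+1} → ℂ` has `ℓ^∞`-integral projective
tensor norm (over `Ω_1 = ⋯ = Ω_{j+1} = ℝ`) at most `μ_{(j)}/j!`.  In particular
`W_k(ℝ) ⊆ 𝒞^{[k]}(ℝ)`. -/
theorem stmt_15 (k j : ℕ) (hk : 1 ≤ k) (hj : j ≤ k)
    (ν : Measure ℝ) (hν : IsFiniteMeasure ν) (h : ℝ → ℂ) (hmeas : Measurable h)
    (hunit : ∀ ξ, ‖h ξ‖ = 1)
    (hmom : (∫⁻ ξ, (‖ξ‖₊ : ℝ≥0∞) ^ k ∂ν) ≠ ∞)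
    (f : ℝ → ℂ)
    (hf : ∀ lam : ℝ, f lam = ∫ ξ, Complex.exp (Complex.I * lam * ξ) * h ξ ∂ν) :
    ContDiff ℝ (k : ℕ∞) f ∧
      iptNorm (Ω := fun _ : Fin (j + 1) => ℝ) (divDiffC f j) ≤
        (∫⁻ ξ, (‖ξ‖₊ : ℝ≥0∞) ^ j ∂ν) / (j.factorial : ℝ≥0∞) ∧
      ∀ r : ℝ, 0 < r → cNorm k r f ≠ ∞ := by
  haveI := hν
  have hf0 : f = gInt ν h 0 := by
    funext x
    rw [hf x]
    simp only [gInt, pow_zero, one_mul]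
  have hiter : ∀ m, m ≤ k → iteratedDeriv m f = gInt ν h m := by
    intro m
    induction m with
    | zero => intro _; rw [iteratedDeriv_zero, hf0]
    | succ m ih =>
      intro hm
      rw [iteratedDeriv_succ, ih (by omega)]
      funext x
      exact (gInt_hasDerivAt ν h hmeas hunit hmom hm x).deriv
  have hcd : ContDiff ℝ (k : ℕ∞) f := by
    rw [hf0]
    exact gInt_contDiff ν h hmeas hunit hmom k 0 (by omega)
  refine ⟨hcd, divDiff_bound ν h hmeas hunit hmom f hiter hj, ?_⟩
  intro r hr
  rw [cNorm]
  rw [← lt_top_iff_ne_top]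
  apply ENNReal.sum_lt_top.mpr
  intro i hi
  have hik : i ≤ k := by
    simp only [Finset.mem_range] at hi
    omega
  calc iptNormIcc r (divDiffC f i) ≤ iptNorm (Ω := fun _ : Fin (i + 1) => ℝ) (divDiffC f i) :=
        iptNormIcc_le r _
    _ ≤ (∫⁻ ξ, (‖ξ‖₊ : ℝ≥0∞) ^ i ∂ν) / (i.factorial : ℝ≥0∞) :=
        divDiff_bound ν h hmeas hunit hmom f hiter hik
    _ < ∞ := ENNReal.div_lt_top (mom_ne_top ν hmom hik) (by simp [Nat.factorial_ne_zero])
end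

section
/- Fix k ∈ ℕ. Then W_k(ℝ)_loc = { f ∈ C^k(ℝ) : η·f ∈ W_k(ℝ) for every η ∈ C_c^∞(ℝ) }. -/
open MeasureTheory Filter
open scoped ENNReal NNReal

/-- Membership in the Wiener space `W_k(ℝ)` : `f(λ) = ∫_ℝ e^{iλξ} μ(dξ)` for a Borel complex
measure `μ` with `∫ |ξ|^k d|μ| < ∞`.  The complex measure `μ` is encoded in polar form
`μ(dξ) = h(ξ) ν(dξ)` with `ν = |μ|` a finite (positive) Borel measure and `|h| ≡ 1`. -/
def memWiener (k : ℕ) (f : ℝ → ℂ) : Prop :=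
  ∃ (ν : MeasureTheory.Measure ℝ) (h : ℝ → ℂ),
    MeasureTheory.IsFiniteMeasure ν ∧ Measurable h ∧ (∀ ξ, ‖h ξ‖ = 1) ∧
    (∫⁻ ξ, (‖ξ‖₊ : ℝ≥0∞) ^ k ∂ν) ≠ ∞ ∧
    ∀ lam : ℝ, f lam = ∫ ξ, Complex.exp (Complex.I * lam * ξ) * h ξ ∂ν

open scoped FourierTransform RealInnerProductSpace

noncomputable def wPhase (z : ℂ) : ℂ := if z = 0 then 1 else z / ‖z‖

lemma wPhase_measurable : Measurable wPhase := by
  unfold wPhase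
  refine Measurable.ite (MeasurableSet.singleton 0 |>.preimage measurable_id) measurable_const ?_
  exact measurable_id.div (Complex.measurable_ofReal.comp measurable_norm)


lemma measurable_expI (lam : ℝ) : Measurable fun ξ : ℝ => Complex.exp (Complex.I * lam * ξ) :=
  Complex.measurable_exp.comp
    ((measurable_const : Measurable fun _ : ℝ => Complex.I * (lam : ℂ)).mul
      Complex.measurable_ofReal)

lemma norm_expI (lam x : ℝ) : ‖Complex.exp (Complex.I * lam * x)‖ = 1 := by
  rw [Complex.norm_exp]
  simp [Complex.mul_re]

lemma measurable_expI' (lam : ℝ) {α : Type*} [MeasurableSpace α] {φ : α → ℝ}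
    (hφ : Measurable φ) : Measurable fun q => Complex.exp (Complex.I * lam * (φ q)) :=
  (measurable_expI lam).comp hφ

lemma norm_wPhase (z : ℂ) : ‖wPhase z‖ = 1 := by
  unfold wPhase
  by_cases h : z = 0
  · simp [h]
  · simp only [h, if_false, norm_div, Complex.norm_real, Real.norm_eq_abs, abs_norm]
    rw [div_self (norm_ne_zero_iff.2 h)]

lemma wPhase_mul_norm (z : ℂ) : wPhase z * (‖z‖ : ℂ) = z := by
  unfold wPhase
  by_cases h : z = 0
  · simp [h]
  · simp only [h, if_false]
    rw [div_mul_cancel₀]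
    exact Complex.ofReal_ne_zero.2 (norm_ne_zero_iff.2 h)

lemma memWiener_of_density {k : ℕ} {f : ℝ → ℂ} (ρ : Measure ℝ) [SigmaFinite ρ]
    (w : ℝ → ℂ) (hw : Measurable w)
    (hfin : (∫⁻ ξ, (‖w ξ‖₊ : ℝ≥0∞) * (1 + (‖ξ‖₊ : ℝ≥0∞) ^ k) ∂ρ) ≠ ∞)
    (hf : ∀ lam : ℝ, f lam = ∫ ξ, Complex.exp (Complex.I * lam * ξ) * w ξ ∂ρ) :
    memWiener k f := by
  have hwm : Measurable fun ξ => (‖w ξ‖₊ : ℝ≥0∞) :=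
    (hw.nnnorm).coe_nnreal_ennreal
  have hle : ∀ ξ, (‖w ξ‖₊ : ℝ≥0∞) ≤ ‖w ξ‖₊ * (1 + (‖ξ‖₊ : ℝ≥0∞) ^ k) := fun ξ => by
    conv_lhs => rw [← mul_one ((‖w ξ‖₊ : ℝ≥0∞))]
    exact mul_le_mul_right (le_self_add : (1:ℝ≥0∞) ≤ 1 + (‖ξ‖₊ : ℝ≥0∞) ^ k) _
  refine ⟨ρ.withDensity fun ξ => (‖w ξ‖₊ : ℝ≥0∞), fun ξ => wPhase (w ξ), ?_, ?_, ?_, ?_, ?_⟩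
  · constructor
    rw [withDensity_apply _ MeasurableSet.univ]
    refine lt_of_le_of_lt (le_trans ?_ (lintegral_mono hle)) hfin.lt_top
    simp [Measure.restrict_univ]
  · exact wPhase_measurable.comp hw
  · exact fun ξ => norm_wPhase _
  · rw [lintegral_withDensity_eq_lintegral_mul _ hwm (measurable_nnnorm.coe_nnreal_ennreal.pow_const _)]
    refine ne_top_of_le_ne_top hfin (lintegral_mono fun ξ => ?_)
    simp only [Pi.mul_apply]
    exact mul_le_mul_right (le_add_self : (‖ξ‖₊ : ℝ≥0∞) ^ k ≤ 1 + (‖ξ‖₊ : ℝ≥0∞) ^ k) _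
  · intro lam
    rw [hf lam]
    have : (ρ.withDensity fun ξ => (‖w ξ‖₊ : ℝ≥0∞))
        = ρ.withDensity fun ξ => ((‖w ξ‖₊ : ℝ≥0) : ℝ≥0∞) := rfl
    rw [this, integral_withDensity_eq_integral_smul hw.nnnorm
        (fun ξ => Complex.exp (Complex.I * lam * ξ) * wPhase (w ξ))]
    refine integral_congr_ae (Filter.Eventually.of_forall fun ξ => ?_)
    simp only []
    rw [NNReal.smul_def, Complex.real_smul, coe_nnnorm]
    conv_lhs => rw [← wPhase_mul_norm (w ξ)]
    ring

lemma memWiener_smul {k : ℕ} {f : ℝ → ℂ} (c : ℂ) (hf : memWiener k f) :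
    memWiener k (fun x => c * f x) := by
  obtain ⟨ν, h, hfin, hm, hn, hmom, hrep⟩ := hf
  refine memWiener_of_density ν (fun ξ => c * h ξ) (measurable_const.mul hm) ?_ ?_
  · have hb : ∀ ξ, (‖c * h ξ‖₊ : ℝ≥0∞) * (1 + (‖ξ‖₊ : ℝ≥0∞) ^ k)
        ≤ ‖c‖₊ * (1 + (‖ξ‖₊ : ℝ≥0∞) ^ k) := fun ξ => by
      refine mul_le_mul_left ?_ _
      simp only [nnnorm_mul, ENNReal.coe_mul, hn]
      norm_cast
      simp [nnnorm_mul, ← norm_toNNReal, hn ξ]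
    refine ne_top_of_le_ne_top ?_ (lintegral_mono hb)
    rw [lintegral_const_mul (f := fun ξ : ℝ => 1 + (‖ξ‖₊ : ℝ≥0∞) ^ k) _ ((measurable_const.add
      (measurable_nnnorm.coe_nnreal_ennreal.pow_const _)))]
    refine ENNReal.mul_ne_top ENNReal.coe_ne_top ?_
    rw [lintegral_add_left measurable_const, lintegral_const]
    exact ENNReal.add_ne_top.2 ⟨ENNReal.mul_ne_top ENNReal.one_ne_top (measure_ne_top ν _), hmom⟩
  · intro lam
    rw [hrep lam, ← integral_const_mul]
    refine integral_congr_ae (Filter.Eventually.of_forall fun ξ => ?_)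
    ring

lemma memWiener_add {k : ℕ} {f g : ℝ → ℂ} (hf : memWiener k f) (hg : memWiener k g) :
    memWiener k (fun x => f x + g x) := by
  obtain ⟨ν₁, h₁, hfin₁, hm₁, hn₁, hmom₁, hrep₁⟩ := hf
  obtain ⟨ν₂, h₂, hfin₂, hm₂, hn₂, hmom₂, hrep₂⟩ := hg
  set ν : Measure ℝ := ν₁ + ν₂ with hν
  have hac₁ : ν₁ ≪ ν := Measure.absolutelyContinuous_of_le (Measure.le_add_right le_rfl)
  have hac₂ : ν₂ ≪ ν := Measure.absolutelyContinuous_of_le (Measure.le_add_left le_rfl)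
  set d₁ : ℝ → ℝ := fun ξ => (ν₁.rnDeriv ν ξ).toReal with hd₁
  set d₂ : ℝ → ℝ := fun ξ => (ν₂.rnDeriv ν ξ).toReal with hd₂
  refine memWiener_of_density ν (fun ξ => (d₁ ξ : ℂ) * h₁ ξ + (d₂ ξ : ℂ) * h₂ ξ) ?_ ?_ ?_
  · exact ((Complex.measurable_ofReal.comp ((Measure.measurable_rnDeriv ν₁ ν).ennreal_toReal)).mul hm₁).add
      ((Complex.measurable_ofReal.comp ((Measure.measurable_rnDeriv ν₂ ν).ennreal_toReal)).mul hm₂)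
  · -- bound the integrand by (rnDeriv₁ + rnDeriv₂) * (1 + ‖ξ‖^k)
    have hb : ∀ᵐ ξ ∂ν, (‖(d₁ ξ : ℂ) * h₁ ξ + (d₂ ξ : ℂ) * h₂ ξ‖₊ : ℝ≥0∞) * (1 + (‖ξ‖₊ : ℝ≥0∞) ^ k)
        ≤ (ν₁.rnDeriv ν ξ + ν₂.rnDeriv ν ξ) * (1 + (‖ξ‖₊ : ℝ≥0∞) ^ k) := by
      filter_upwards [Measure.rnDeriv_lt_top ν₁ ν, Measure.rnDeriv_lt_top ν₂ ν] with ξ h1 h2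
      refine mul_le_mul_left ?_ _
      have hnorm : ‖(d₁ ξ : ℂ) * h₁ ξ + (d₂ ξ : ℂ) * h₂ ξ‖ ≤ d₁ ξ + d₂ ξ := by
        refine (norm_add_le _ _).trans ?_
        simp only [norm_mul, Complex.norm_real, hn₁, hn₂, mul_one, Real.norm_eq_abs]
        rw [abs_of_nonneg ENNReal.toReal_nonneg, abs_of_nonneg ENNReal.toReal_nonneg]
      calc (‖(d₁ ξ : ℂ) * h₁ ξ + (d₂ ξ : ℂ) * h₂ ξ‖₊ : ℝ≥0∞)
          ≤ ENNReal.ofReal (d₁ ξ + d₂ ξ) := by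
            rw [← ENNReal.ofReal_coe_nnreal, coe_nnnorm]
            exact ENNReal.ofReal_le_ofReal hnorm
        _ = ENNReal.ofReal (d₁ ξ) + ENNReal.ofReal (d₂ ξ) :=
            ENNReal.ofReal_add ENNReal.toReal_nonneg ENNReal.toReal_nonneg
        _ = ν₁.rnDeriv ν ξ + ν₂.rnDeriv ν ξ := by
            rw [hd₁, hd₂]
            simp only []
            rw [ENNReal.ofReal_toReal h1.ne, ENNReal.ofReal_toReal h2.ne]
    refine ne_top_of_le_ne_top ?_ (lintegral_mono_ae hb)
    have hmeas : AEMeasurable (fun ξ : ℝ => 1 + (‖ξ‖₊ : ℝ≥0∞) ^ k) ν :=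
      (measurable_const.add (measurable_nnnorm.coe_nnreal_ennreal.pow_const _)).aemeasurable
    have hsplit : ∫⁻ ξ, (ν₁.rnDeriv ν ξ + ν₂.rnDeriv ν ξ) * (1 + (‖ξ‖₊ : ℝ≥0∞) ^ k) ∂ν
        = (∫⁻ ξ, ν₁.rnDeriv ν ξ * (1 + (‖ξ‖₊ : ℝ≥0∞) ^ k) ∂ν)
          + ∫⁻ ξ, ν₂.rnDeriv ν ξ * (1 + (‖ξ‖₊ : ℝ≥0∞) ^ k) ∂ν := by
      simp_rw [add_mul]
      exact lintegral_add_left ((Measure.measurable_rnDeriv ν₁ ν).mul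
        (measurable_const.add (measurable_nnnorm.coe_nnreal_ennreal.pow_const _))) _
    rw [hsplit, lintegral_rnDeriv_mul hac₁ hmeas, lintegral_rnDeriv_mul hac₂ hmeas]
    have h1 : (∫⁻ ξ, (1 + (‖ξ‖₊ : ℝ≥0∞) ^ k) ∂ν₁) ≠ ∞ := by
      rw [lintegral_add_left measurable_const, lintegral_const]
      exact ENNReal.add_ne_top.2 ⟨ENNReal.mul_ne_top ENNReal.one_ne_top (measure_ne_top ν₁ _), hmom₁⟩
    have h2 : (∫⁻ ξ, (1 + (‖ξ‖₊ : ℝ≥0∞) ^ k) ∂ν₂) ≠ ∞ := by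
      rw [lintegral_add_left measurable_const, lintegral_const]
      exact ENNReal.add_ne_top.2 ⟨ENNReal.mul_ne_top ENNReal.one_ne_top (measure_ne_top ν₂ _), hmom₂⟩
    exact ENNReal.add_ne_top.2 ⟨h1, h2⟩
  · intro lam
    have hint₁ : Integrable (fun ξ : ℝ => Complex.exp (Complex.I * lam * ξ) * h₁ ξ) ν₁ := by
      refine Integrable.mono' (integrable_const 1) ?_ ?_
      · exact ((measurable_expI lam).mul hm₁).aestronglyMeasurable
      · exact Filter.Eventually.of_forall fun ξ => by
          rw [norm_mul, hn₁, mul_one, norm_expI]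
    have hint₂ : Integrable (fun ξ : ℝ => Complex.exp (Complex.I * lam * ξ) * h₂ ξ) ν₂ := by
      refine Integrable.mono' (integrable_const 1) ?_ ?_
      · exact ((measurable_expI lam).mul hm₂).aestronglyMeasurable
      · exact Filter.Eventually.of_forall fun ξ => by
          rw [norm_mul, hn₂, mul_one, norm_expI]
    have key₁ : ∫ ξ, (d₁ ξ : ℂ) • (Complex.exp (Complex.I * lam * ξ) * h₁ ξ) ∂ν
        = ∫ ξ, Complex.exp (Complex.I * lam * ξ) * h₁ ξ ∂ν₁ := by
      have := integral_rnDeriv_smul (E := ℂ) hac₁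
        (f := fun ξ : ℝ => Complex.exp (Complex.I * lam * ξ) * h₁ ξ)
      rw [← this]
      refine integral_congr_ae (Filter.Eventually.of_forall fun ξ => ?_)
      simp only [hd₁, smul_eq_mul, Complex.real_smul]
    have key₂ : ∫ ξ, (d₂ ξ : ℂ) • (Complex.exp (Complex.I * lam * ξ) * h₂ ξ) ∂ν
        = ∫ ξ, Complex.exp (Complex.I * lam * ξ) * h₂ ξ ∂ν₂ := by
      have := integral_rnDeriv_smul (E := ℂ) hac₂
        (f := fun ξ : ℝ => Complex.exp (Complex.I * lam * ξ) * h₂ ξ)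
      rw [← this]
      refine integral_congr_ae (Filter.Eventually.of_forall fun ξ => ?_)
      simp only [hd₂, smul_eq_mul, Complex.real_smul]
    have hi₁ : Integrable (fun ξ : ℝ => (d₁ ξ : ℂ) • (Complex.exp (Complex.I * lam * ξ) * h₁ ξ)) ν := by
      have := (integrable_rnDeriv_smul_iff (E := ℂ) hac₁
        (f := fun ξ : ℝ => Complex.exp (Complex.I * lam * ξ) * h₁ ξ)).2 hint₁
      refine this.congr (Filter.Eventually.of_forall fun ξ => ?_)
      simp only [hd₁, smul_eq_mul, Complex.real_smul]
    have hi₂ : Integrable (fun ξ : ℝ => (d₂ ξ : ℂ) • (Complex.exp (Complex.I * lam * ξ) * h₂ ξ)) ν := by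
      have := (integrable_rnDeriv_smul_iff (E := ℂ) hac₂
        (f := fun ξ : ℝ => Complex.exp (Complex.I * lam * ξ) * h₂ ξ)).2 hint₂
      refine this.congr (Filter.Eventually.of_forall fun ξ => ?_)
      simp only [hd₂, smul_eq_mul, Complex.real_smul]
    rw [hrep₁ lam, hrep₂ lam, ← key₁, ← key₂, ← integral_add hi₁ hi₂]
    refine integral_congr_ae (Filter.Eventually.of_forall fun ξ => ?_)
    simp only [smul_eq_mul]
    ring

lemma memWiener_of_map {k : ℕ} (ρ : Measure (ℝ × ℝ)) [IsFiniteMeasure ρ]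
    (φ : ℝ × ℝ → ℝ) (hφ : Measurable φ)
    (hmom : (∫⁻ q, (‖φ q‖₊ : ℝ≥0∞) ^ k ∂ρ) ≠ ∞) (f : ℝ → ℂ)
    (hf : ∀ lam : ℝ, f lam = ∫ q, Complex.exp (Complex.I * lam * (φ q)) ∂ρ) :
    memWiener k f := by
  refine ⟨ρ.map φ, fun _ => 1, ?_, measurable_const, fun _ => norm_one, ?_, ?_⟩
  · constructor
    rw [Measure.map_apply hφ MeasurableSet.univ]
    exact measure_lt_top ρ _
  · rw [lintegral_map (measurable_nnnorm.coe_nnreal_ennreal.pow_const _) hφ]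
    exact hmom
  · intro lam
    rw [hf lam]
    have : ∫ ξ, Complex.exp (Complex.I * lam * ξ) * 1 ∂(ρ.map φ)
        = ∫ ξ, Complex.exp (Complex.I * lam * ξ) ∂(ρ.map φ) := by simp
    rw [this, integral_map hφ.aemeasurable]
    exact (Complex.continuous_exp.comp ((continuous_const.mul
      Complex.continuous_ofReal))).aestronglyMeasurable

lemma memWiener_of_prod {k : ℕ} (ρ : Measure (ℝ × ℝ)) [IsFiniteMeasure ρ]
    (φ : ℝ × ℝ → ℝ) (hφ : Measurable φ) (u : ℝ × ℝ → ℂ) (hu : Measurable u)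
    (hub : ∀ q, ‖u q‖ ≤ 1)
    (hmom : (∫⁻ q, (‖φ q‖₊ : ℝ≥0∞) ^ k ∂ρ) ≠ ∞) (f : ℝ → ℂ)
    (hf : ∀ lam : ℝ, f lam = ∫ q, Complex.exp (Complex.I * lam * (φ q)) * u q ∂ρ) :
    memWiener k f := by
  -- the four nonnegative parts of u
  set c₁ : ℝ × ℝ → ℝ≥0 := fun q => ((u q).re).toNNReal with hc₁
  set c₂ : ℝ × ℝ → ℝ≥0 := fun q => (-(u q).re).toNNReal with hc₂
  set c₃ : ℝ × ℝ → ℝ≥0 := fun q => ((u q).im).toNNReal with hc₃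
  set c₄ : ℝ × ℝ → ℝ≥0 := fun q => (-(u q).im).toNNReal with hc₄
  have hm₁ : Measurable c₁ := (Complex.measurable_re.comp hu).real_toNNReal
  have hm₂ : Measurable c₂ := ((Complex.measurable_re.comp hu).neg).real_toNNReal
  have hm₃ : Measurable c₃ := (Complex.measurable_im.comp hu).real_toNNReal
  have hm₄ : Measurable c₄ := ((Complex.measurable_im.comp hu).neg).real_toNNReal
  have hble : ∀ (c : ℝ × ℝ → ℝ≥0), Measurable c → (∀ q, (c q : ℝ≥0∞) ≤ 1) →
      memWiener k (fun lam => ∫ q, Complex.exp (Complex.I * lam * (φ q))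
        ∂(ρ.withDensity fun q => (c q : ℝ≥0∞))) := by
    intro c hc hcle
    have : IsFiniteMeasure (ρ.withDensity fun q => (c q : ℝ≥0∞)) := by
      constructor
      rw [withDensity_apply _ MeasurableSet.univ, Measure.restrict_univ]
      calc ∫⁻ q, (c q : ℝ≥0∞) ∂ρ ≤ ∫⁻ _, 1 ∂ρ := lintegral_mono hcle
        _ = ρ Set.univ := by rw [lintegral_one]
        _ < ∞ := measure_lt_top ρ _
    refine memWiener_of_map _ φ hφ ?_ _ (fun lam => rfl)
    have hφm : Measurable fun q => (‖φ q‖₊ : ℝ≥0∞) ^ k :=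
      (hφ.nnnorm.coe_nnreal_ennreal).pow_const _
    rw [lintegral_withDensity_eq_lintegral_mul _ hc.coe_nnreal_ennreal hφm]
    simp only [Pi.mul_apply]
    refine ne_top_of_le_ne_top hmom (lintegral_mono fun q => ?_)
    calc (c q : ℝ≥0∞) * (‖φ q‖₊ : ℝ≥0∞) ^ k ≤ 1 * (‖φ q‖₊ : ℝ≥0∞) ^ k :=
        mul_le_mul_left (hcle q) _
      _ = _ := one_mul _
  have hcle : ∀ q, ((c₁ q : ℝ≥0∞) ≤ 1) ∧ ((c₂ q : ℝ≥0∞) ≤ 1)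
      ∧ ((c₃ q : ℝ≥0∞) ≤ 1) ∧ ((c₄ q : ℝ≥0∞) ≤ 1) := by
    intro q
    have h1 : |(u q).re| ≤ 1 := le_trans (Complex.abs_re_le_norm _) (hub q)
    have h2 : |(u q).im| ≤ 1 := le_trans (Complex.abs_im_le_norm _) (hub q)
    have key : ∀ x : ℝ, x ≤ 1 → ((Real.toNNReal x : ℝ≥0∞) ≤ 1) := by
      intro x hx
      rw [show (1 : ℝ≥0∞) = ((1 : ℝ≥0) : ℝ≥0∞) from rfl, ENNReal.coe_le_coe,
        ← Real.toNNReal_one]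
      exact Real.toNNReal_mono hx
    obtain ⟨h1a, h1b⟩ := abs_le.1 h1
    obtain ⟨h2a, h2b⟩ := abs_le.1 h2
    exact ⟨key _ h1b, key _ (by linarith), key _ h2b, key _ (by linarith)⟩
  set F₁ : ℝ → ℂ := fun lam => ∫ q, Complex.exp (Complex.I * lam * (φ q))
    ∂(ρ.withDensity fun q => (c₁ q : ℝ≥0∞)) with hF₁
  set F₂ : ℝ → ℂ := fun lam => ∫ q, Complex.exp (Complex.I * lam * (φ q))
    ∂(ρ.withDensity fun q => (c₂ q : ℝ≥0∞)) with hF₂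
  set F₃ : ℝ → ℂ := fun lam => ∫ q, Complex.exp (Complex.I * lam * (φ q))
    ∂(ρ.withDensity fun q => (c₃ q : ℝ≥0∞)) with hF₃
  set F₄ : ℝ → ℂ := fun lam => ∫ q, Complex.exp (Complex.I * lam * (φ q))
    ∂(ρ.withDensity fun q => (c₄ q : ℝ≥0∞)) with hF₄
  have hW₁ := hble c₁ hm₁ (fun q => (hcle q).1)
  have hW₂ := hble c₂ hm₂ (fun q => (hcle q).2.1)
  have hW₃ := hble c₃ hm₃ (fun q => (hcle q).2.2.1)
  have hW₄ := hble c₄ hm₄ (fun q => (hcle q).2.2.2)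
  have hsum : memWiener k (fun lam => F₁ lam + ((-1) * F₂ lam
      + (Complex.I * F₃ lam + (-Complex.I) * F₄ lam))) :=
    memWiener_add hW₁ (memWiener_add (memWiener_smul _ hW₂)
      (memWiener_add (memWiener_smul _ hW₃) (memWiener_smul _ hW₄)))
  have hfe : f = fun lam => F₁ lam + ((-1) * F₂ lam
      + (Complex.I * F₃ lam + (-Complex.I) * F₄ lam)) := by
    funext lam
    have hintc : ∀ (c : ℝ × ℝ → ℝ≥0), Measurable c → (∀ q, (c q : ℝ≥0∞) ≤ 1) →
        (∫ q, Complex.exp (Complex.I * lam * (φ q)) ∂(ρ.withDensity fun q => (c q : ℝ≥0∞)))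
          = ∫ q, (c q : ℝ) • Complex.exp (Complex.I * lam * (φ q)) ∂ρ := by
      intro c hc _
      exact integral_withDensity_eq_integral_smul hc _
    have hIc : ∀ (c : ℝ × ℝ → ℝ≥0), Measurable c → (∀ q, (c q : ℝ≥0∞) ≤ 1) →
        Integrable (fun q => (c q : ℝ) • Complex.exp (Complex.I * lam * (φ q))) ρ := by
      intro c hc hle
      refine Integrable.mono' (integrable_const 1) ?_ ?_
      · exact ((hc.coe_nnreal_real).smul (measurable_expI' lam hφ)).aestronglyMeasurable
      · refine Filter.Eventually.of_forall fun q => ?_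
        rw [norm_smul, norm_expI, mul_one, Real.norm_eq_abs, abs_of_nonneg (c q).coe_nonneg]
        have := hle q
        rw [show (1 : ℝ≥0∞) = ((1 : ℝ≥0) : ℝ≥0∞) by norm_num, ENNReal.coe_le_coe] at this
        exact_mod_cast this
    have hI1 := hIc c₁ hm₁ (fun q => (hcle q).1)
    have hI2 := hIc c₂ hm₂ (fun q => (hcle q).2.1)
    have hI3 := hIc c₃ hm₃ (fun q => (hcle q).2.2.1)
    have hI4 := hIc c₄ hm₄ (fun q => (hcle q).2.2.2)
    have hpt : ∀ q, Complex.exp (Complex.I * lam * (φ q)) * u q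
        = (c₁ q : ℝ) • Complex.exp (Complex.I * lam * (φ q))
          + ((-1) * ((c₂ q : ℝ) • Complex.exp (Complex.I * lam * (φ q)))
            + (Complex.I * ((c₃ q : ℝ) • Complex.exp (Complex.I * lam * (φ q)))
              + (-Complex.I) * ((c₄ q : ℝ) • Complex.exp (Complex.I * lam * (φ q))))) := by
      intro q
      have hre : ((c₁ q : ℝ) - (c₂ q : ℝ)) = (u q).re := by
        simp only [hc₁, hc₂, Real.coe_toNNReal']
        rcases le_total ((u q).re) 0 with h | h
        · rw [max_eq_right h, max_eq_left (by linarith : (0:ℝ) ≤ -(u q).re)]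
          ring
        · rw [max_eq_left h, max_eq_right (by linarith : -(u q).re ≤ 0)]
          ring
      have him : ((c₃ q : ℝ) - (c₄ q : ℝ)) = (u q).im := by
        simp only [hc₃, hc₄, Real.coe_toNNReal']
        rcases le_total ((u q).im) 0 with h | h
        · rw [max_eq_right h, max_eq_left (by linarith : (0:ℝ) ≤ -(u q).im)]
          ring
        · rw [max_eq_left h, max_eq_right (by linarith : -(u q).im ≤ 0)]
          ring
      have hu' : u q = (((c₁ q : ℝ) - (c₂ q : ℝ) : ℝ) : ℂ)
          + (((c₃ q : ℝ) - (c₄ q : ℝ) : ℝ) : ℂ) * Complex.I := by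
        rw [hre, him]
        exact (Complex.re_add_im _).symm
      rw [hu']
      simp only [Complex.real_smul]
      push_cast
      ring
    simp only [hF₁, hF₂, hF₃, hF₄, hintc c₁ hm₁ (fun q => (hcle q).1),
      hintc c₂ hm₂ (fun q => (hcle q).2.1), hintc c₃ hm₃ (fun q => (hcle q).2.2.1),
      hintc c₄ hm₄ (fun q => (hcle q).2.2.2)]
    have hI34 : Integrable (fun q => Complex.I * ((c₃ q : ℝ) • Complex.exp
        (Complex.I * lam * (φ q))) + (-Complex.I) * ((c₄ q : ℝ) • Complex.exp
        (Complex.I * lam * (φ q)))) ρ :=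
      (hI3.const_mul Complex.I).add (hI4.const_mul (-Complex.I))
    have hI234 : Integrable (fun q => (-1) * ((c₂ q : ℝ) • Complex.exp
        (Complex.I * lam * (φ q))) + (Complex.I * ((c₃ q : ℝ) • Complex.exp
        (Complex.I * lam * (φ q))) + (-Complex.I) * ((c₄ q : ℝ) • Complex.exp
        (Complex.I * lam * (φ q))))) ρ :=
      (hI2.const_mul (-1)).add hI34
    rw [hf lam, integral_congr_ae (Filter.Eventually.of_forall hpt),
      integral_add hI1 hI234,
      integral_add (hI2.const_mul (-1)) hI34,
      integral_add (hI3.const_mul Complex.I) (hI4.const_mul (-Complex.I)),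
      integral_const_mul, integral_const_mul, integral_const_mul]
  rw [hfe]
  exact hsum

lemma toSchwartz {η : ℝ → ℂ} (hs : ContDiff ℝ (⊤ : ℕ∞) η) (hc : HasCompactSupport η) :
    ∃ Φ : SchwartzMap ℝ ℂ, ⇑Φ = η := by
  refine ⟨⟨η, hs, ?_⟩, rfl⟩
  intro j n
  have h1 : Continuous fun x : ℝ => ‖x‖ ^ j * ‖iteratedFDeriv ℝ n η x‖ :=
    ((continuous_norm).pow j).mul (hs.continuous_iteratedFDeriv (by exact_mod_cast le_top)).norm
  have h2 : HasCompactSupport fun x : ℝ => ‖x‖ ^ j * ‖iteratedFDeriv ℝ n η x‖ := by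
    have : HasCompactSupport fun x : ℝ => ‖iteratedFDeriv ℝ n η x‖ :=
      (hc.iteratedFDeriv n).comp_left (g := norm) norm_zero
    exact HasCompactSupport.mul_left this
  obtain ⟨C, hC⟩ := h1.bounded_above_of_compact_support h2
  exact ⟨C, fun x => (le_abs_self _).trans ((Real.norm_eq_abs _) ▸ hC x)⟩

lemma memWiener_smooth_mul {k : ℕ} {g : ℝ → ℂ} (η : ℝ → ℂ)
    (hs : ContDiff ℝ (⊤ : ℕ∞) η) (hc : HasCompactSupport η) (hg : memWiener k g) :
    memWiener k (fun x => η x * g x) := by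
  classical
  obtain ⟨ν, h, hfin, hm, hn, hmom, hrep⟩ := hg
  obtain ⟨Φ, hΦ⟩ := toSchwartz hs hc
  set Ψ : SchwartzMap ℝ ℂ := SchwartzMap.fourierTransformCLM ℂ Φ with hΨ
  set F : ℝ → ℂ := fun t => Ψ t with hF
  have hFeq : F = 𝓕 η := by
    rw [hF, hΨ]
    ext t
    rw [SchwartzMap.fourierTransformCLM_apply, SchwartzMap.fourier_coe, hΦ]
  have hFcont : Continuous F := Ψ.continuous
  have hFint : Integrable F := Ψ.integrable
  have hFmom : Integrable (fun x : ℝ => ‖x‖ ^ k * ‖F x‖) := Ψ.integrable_pow_mul volume k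
  have hηcont : Continuous η := hs.continuous
  have hηint : Integrable η := hηcont.integrable_of_hasCompactSupport hc
  -- Fourier inversion, rewritten with the kernel exp(I x (2π t))
  have hηrep : ∀ x : ℝ, η x = ∫ t : ℝ, Complex.exp (Complex.I * x * ((2 * Real.pi * t : ℝ) : ℂ))
      * F t := by
    intro x
    have hinv := hηcont.fourierInv_fourier_eq hηint (hFeq ▸ hFint)
    have h1 : η x = 𝓕⁻ (𝓕 η) x := by rw [hinv]
    rw [h1, Real.fourierInv_eq']
    rw [← hFeq]
    refine integral_congr_ae (Filter.Eventually.of_forall fun t => ?_)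
    simp only [smul_eq_mul]
    congr 1
    have : (inner ℝ t x : ℝ) = t * x := by simp [RCLike.inner_apply]; ring
    rw [this]
    push_cast
    ring
  set μF : Measure ℝ := volume.withDensity fun t => (‖F t‖₊ : ℝ≥0∞) with hμF
  haveI : IsFiniteMeasure μF := by
    constructor
    rw [hμF, withDensity_apply _ MeasurableSet.univ, Measure.restrict_univ]
    exact hFint.2.lt_top
  set ρ : Measure (ℝ × ℝ) := μF.prod ν with hρ
  haveI : IsFiniteMeasure ρ := by rw [hρ]; infer_instance
  have hFmeas : Measurable F := hFcont.measurable
  refine memWiener_of_prod ρ (fun q => 2 * Real.pi * q.1 + q.2)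
    (by fun_prop) (fun q => wPhase (F q.1) * h q.2)
    ((wPhase_measurable.comp (hFmeas.comp measurable_fst)).mul (hm.comp measurable_snd))
    (fun q => by rw [norm_mul, norm_wPhase, hn, mul_one]) ?_ _ ?_
  · -- moment bound
    have hptb : ∀ q : ℝ × ℝ, (‖2 * Real.pi * q.1 + q.2‖₊ : ℝ≥0∞) ^ k
        ≤ 2 ^ k * ((‖(2 * Real.pi * q.1 : ℝ)‖₊ : ℝ≥0∞) ^ k + (‖q.2‖₊ : ℝ≥0∞) ^ k) := by
      intro q
      set x : ℝ≥0∞ := (‖(2 * Real.pi * q.1 : ℝ)‖₊ : ℝ≥0∞)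
      set y : ℝ≥0∞ := (‖q.2‖₊ : ℝ≥0∞)
      have h0 : (‖2 * Real.pi * q.1 + q.2‖₊ : ℝ≥0∞) ≤ x + y := by
        rw [← ENNReal.coe_add]
        exact_mod_cast nnnorm_add_le _ _
      calc (‖2 * Real.pi * q.1 + q.2‖₊ : ℝ≥0∞) ^ k ≤ (x + y) ^ k :=
            pow_le_pow_left₀ zero_le h0 k
        _ ≤ (2 * (x ⊔ y)) ^ k := by
            refine pow_le_pow_left₀ zero_le ?_ k
            rw [two_mul]
            exact add_le_add le_sup_left le_sup_right
        _ = 2 ^ k * (x ⊔ y) ^ k := mul_pow _ _ _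
        _ ≤ 2 ^ k * (x ^ k + y ^ k) := by
            refine mul_le_mul_right ?_ _
            rcases le_total x y with hxy | hxy
            · rw [sup_eq_right.2 hxy]; exact le_add_self
            · rw [sup_eq_left.2 hxy]; exact le_self_add
    refine ne_top_of_le_ne_top ?_ (lintegral_mono hptb)
    have hmeasA : Measurable fun q : ℝ × ℝ =>
        (‖(2 * Real.pi * q.1 : ℝ)‖₊ : ℝ≥0∞) ^ k + (‖q.2‖₊ : ℝ≥0∞) ^ k := by fun_prop
    rw [lintegral_const_mul _ hmeasA]
    refine ENNReal.mul_ne_top (by simp) ?_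
    rw [hρ, lintegral_prod _ hmeasA.aemeasurable]
    have hinner : ∀ t : ℝ, (∫⁻ ξ, ((‖(2 * Real.pi * t : ℝ)‖₊ : ℝ≥0∞) ^ k
        + (‖ξ‖₊ : ℝ≥0∞) ^ k) ∂ν)
        = (‖(2 * Real.pi * t : ℝ)‖₊ : ℝ≥0∞) ^ k * ν Set.univ
          + ∫⁻ ξ, (‖ξ‖₊ : ℝ≥0∞) ^ k ∂ν := by
      intro t
      rw [lintegral_add_left measurable_const, lintegral_const]
    simp only [hinner]
    have hA : Measurable fun t : ℝ => (‖(2 * Real.pi * t : ℝ)‖₊ : ℝ≥0∞) ^ k := by fun_prop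
    rw [lintegral_add_left (hA.mul_const _), lintegral_mul_const _ hA, lintegral_const]
    refine ENNReal.add_ne_top.2 ⟨ENNReal.mul_ne_top ?_ (measure_ne_top ν _),
      ENNReal.mul_ne_top hmom (measure_ne_top μF _)⟩
    -- ∫⁻ ‖2πt‖^k dμF < ∞
    have hAeq : ∀ t : ℝ, (‖(2 * Real.pi * t : ℝ)‖₊ : ℝ≥0∞) ^ k
        = (‖(2 * Real.pi : ℝ)‖₊ : ℝ≥0∞) ^ k * (‖t‖₊ : ℝ≥0∞) ^ k := by
      intro t
      rw [nnnorm_mul, ENNReal.coe_mul, mul_pow]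
    simp only [hAeq]
    rw [hμF, lintegral_withDensity_eq_lintegral_mul _ (by fun_prop) (by fun_prop)]
    simp only [Pi.mul_apply]
    have : ∫⁻ t, (‖F t‖₊ : ℝ≥0∞) * ((‖(2 * Real.pi : ℝ)‖₊ : ℝ≥0∞) ^ k * (‖t‖₊ : ℝ≥0∞) ^ k) ∂volume
        = (‖(2 * Real.pi : ℝ)‖₊ : ℝ≥0∞) ^ k * ∫⁻ t, (‖t‖₊ : ℝ≥0∞) ^ k * (‖F t‖₊ : ℝ≥0∞) ∂volume := by
      rw [← lintegral_const_mul _ (by fun_prop)]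
      refine lintegral_congr fun t => ?_
      ring
    rw [this]
    refine ENNReal.mul_ne_top (ENNReal.pow_ne_top ENNReal.coe_ne_top) ?_
    have hfin2 : (∫⁻ t, (‖(‖t‖ ^ k * ‖F t‖ : ℝ)‖₊ : ℝ≥0∞) ∂volume) < ∞ := hFmom.2
    refine ne_of_lt (lt_of_le_of_lt (le_of_eq ?_) hfin2)
    refine lintegral_congr fun t => ?_
    rw [← ENNReal.coe_pow, ← ENNReal.coe_mul]
    congr 1
    rw [nnnorm_mul, nnnorm_pow, nnnorm_norm, nnnorm_norm]
  · -- representation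
    intro lam
    have hsplit : ∀ q : ℝ × ℝ,
        Complex.exp (Complex.I * lam * ((2 * Real.pi * q.1 + q.2 : ℝ) : ℂ))
          * (wPhase (F q.1) * h q.2)
        = (Complex.exp (Complex.I * lam * ((2 * Real.pi * q.1 : ℝ) : ℂ)) * wPhase (F q.1))
          * (Complex.exp (Complex.I * lam * (q.2 : ℂ)) * h q.2) := by
      intro q
      rw [show Complex.I * lam * ((2 * Real.pi * q.1 + q.2 : ℝ) : ℂ)
          = Complex.I * lam * ((2 * Real.pi * q.1 : ℝ) : ℂ)
            + Complex.I * lam * ((q.2 : ℝ) : ℂ) by push_cast; ring,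
        Complex.exp_add]
      ring
    rw [show (∫ q, Complex.exp (Complex.I * lam * ((2 * Real.pi * q.1 + q.2 : ℝ) : ℂ))
        * (wPhase (F q.1) * h q.2) ∂ρ)
      = ∫ q : ℝ × ℝ, (Complex.exp (Complex.I * lam * ((2 * Real.pi * q.1 : ℝ) : ℂ))
          * wPhase (F q.1))
        * (Complex.exp (Complex.I * lam * (q.2 : ℂ)) * h q.2) ∂ρ from
      integral_congr_ae (Filter.Eventually.of_forall hsplit)]
    rw [show (μF.prod ν) = ρ from (hρ).symm] at *
    rw [hρ, MeasureTheory.integral_prod_mul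
      (f := fun t : ℝ => Complex.exp (Complex.I * lam * ((2 * Real.pi * t : ℝ) : ℂ))
        * wPhase (F t))
      (g := fun ξ : ℝ => Complex.exp (Complex.I * lam * (ξ : ℂ)) * h ξ)]
    have hfirst : (∫ t, Complex.exp (Complex.I * lam * ((2 * Real.pi * t : ℝ) : ℂ))
        * wPhase (F t) ∂μF) = η lam := by
      rw [hμF, integral_withDensity_eq_integral_smul hFmeas.nnnorm]
      rw [hηrep lam]
      refine integral_congr_ae (Filter.Eventually.of_forall fun t => ?_)
      simp only [NNReal.smul_def, Complex.real_smul, coe_nnnorm]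
      conv_rhs => rw [← wPhase_mul_norm (F t)]
      ring
    rw [hfirst, ← hrep lam]


/-- Lemma 4.2: `W_k(ℝ)_loc = {f ∈ C^k(ℝ) : η f ∈ W_k(ℝ) for all
η ∈ C_c^∞(ℝ)}`. -/
theorem stmt_17 (k : ℕ) (hk : 1 ≤ k) (f : ℝ → ℂ) :
    (ContDiff ℝ (k : ℕ∞) f ∧
        ∀ r : ℝ, 0 < r → ∃ g : ℝ → ℂ, memWiener k g ∧ Set.EqOn g f (Set.Icc (-r) r)) ↔
      (ContDiff ℝ (k : ℕ∞) f ∧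
        ∀ η : ℝ → ℂ, ContDiff ℝ (⊤ : ℕ∞) η → HasCompactSupport η →
          memWiener k (fun x => η x * f x)) := by
  constructor
  · rintro ⟨hf, hloc⟩
    refine ⟨hf, fun η hηs hηc => ?_⟩
    obtain ⟨R, hR⟩ := hηc.isBounded.subset_closedBall (0 : ℝ)
    set r : ℝ := max R 1 with hr
    have hr0 : 0 < r := lt_of_lt_of_le one_pos (le_max_right _ _)
    obtain ⟨g, hg, hEq⟩ := hloc r hr0
    have hsub : tsupport η ⊆ Set.Icc (-r) r := by
      refine hR.trans ?_
      rw [Real.closedBall_eq_Icc, zero_sub, zero_add]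
      exact Set.Icc_subset_Icc (neg_le_neg (le_max_left _ _)) (le_max_left _ _)
    have hEqfun : (fun x => η x * f x) = fun x => η x * g x := by
      funext x
      by_cases hx : x ∈ Set.Icc (-r) r
      · rw [hEq hx]
      · have : η x = 0 := image_eq_zero_of_notMem_tsupport fun hmem => hx (hsub hmem)
        rw [this, zero_mul, zero_mul]
    rw [hEqfun]
    exact memWiener_smooth_mul η hηs hηc hg
  · rintro ⟨hf, hmul⟩
    refine ⟨hf, fun r hr => ?_⟩
    set c : ContDiffBump (0 : ℝ) := ⟨r, r + 1, hr, lt_add_one r⟩ with hcd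
    set η : ℝ → ℂ := fun x => ((c x : ℝ) : ℂ) with hη
    have hηs : ContDiff ℝ (⊤ : ℕ∞) η := by
      exact Complex.ofRealCLM.contDiff.comp c.contDiff
    have hηc : HasCompactSupport η := by
      have : HasCompactSupport (fun x : ℝ => c x) := c.hasCompactSupport
      exact this.comp_left (g := fun t : ℝ => (t : ℂ)) (by norm_num)
    refine ⟨fun x => η x * f x, hmul η hηs hηc, fun x hx => ?_⟩
    have hxball : x ∈ Metric.closedBall (0 : ℝ) r := by
      rw [Real.closedBall_eq_Icc, zero_sub, zero_add]
      exact hx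
    have : c x = 1 := c.one_of_mem_closedBall hxball
    simp only [hη, this, Complex.ofReal_one, one_mul]
end
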